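/- arXiv:2508.09720 — 10 statements merged into one kernel-verified Lean document; each statement's English description precedes it below -/
import Mathlib

section
/- For a connected hypergraph H with sink q, all maximal H-parking functions have the same sum of entries (degree). Consequently the degree sequence of H-parking functions is a pure O-sequence. -/
open scoped Classical

def degT {V : Type*} [DecidableEq V] (E : Finset (Finset V)) (T : Finset V) (i : V) : ℕ :=
  (E.filter fun e => i ∈ e ∧ ¬ e ⊆ T).card

def IsHParking {V : Type*} [Fintype V] [DecidableEq V] (E : Finset (Finset V)) (q : V)
    (c : V → ℕ) : Prop :=
  ∀ T : Finset V, T.Nonempty → (∀ i ∈ T, i ≠ q) → ∃ i ∈ T, c i < degT E T i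

def HConnected {V : Type*} (E : Finset (Finset V)) : Prop :=
  ∀ v w : V, Relation.ReflTransGen (fun a b => ∃ e ∈ E, a ∈ e ∧ b ∈ e) v w

/-- A maximal `H`-parking function (maximal in the coordinatewise order among
configurations vanishing at the sink). -/
def IsMaximalHParking {V : Type*} [Fintype V] [DecidableEq V] (E : Finset (Finset V)) (q : V)
    (c : V → ℕ) : Prop :=
  c q = 0 ∧ IsHParking E q c ∧
    ∀ c' : V → ℕ, c' q = 0 → IsHParking E q c' → c ≤ c' → c' = c

section Aux

variable {V : Type*} [Fintype V] [DecidableEq V]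

lemma degT_antitone (E : Finset (Finset V)) {T T' : Finset V} (h : T ⊆ T') (i : V) :
    degT E T' i ≤ degT E T i := by
  apply Finset.card_le_card
  intro e he
  simp only [Finset.mem_filter] at he ⊢
  exact ⟨he.1, he.2.1, fun hs => he.2.2 (hs.trans h)⟩

/-- A burning order for `c`: each vertex, at the moment it burns (with remaining set the
suffix starting at it), has `c` value less than its current degree. -/
def Burn (E : Finset (Finset V)) (c : V → ℕ) : List V → Prop
  | [] => True
  | i :: l => c i < degT E (i :: l).toFinset i ∧ Burn E c l

/-- The tight configuration associated to a burning order. -/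
def tightAt (E : Finset (Finset V)) : List V → V → ℕ
  | [], _ => 0
  | i :: l, v => if v = i then degT E (i :: l).toFinset i - 1 else tightAt E l v

def degSum (E : Finset (Finset V)) : List V → ℕ
  | [] => 0
  | i :: l => degT E (i :: l).toFinset i + degSum E l

lemma exists_burn (E : Finset (Finset V)) (q : V) (c : V → ℕ) (hc : IsHParking E q c) :
    ∀ (n : ℕ) (T : Finset V), T.card = n → (∀ i ∈ T, i ≠ q) →
      ∃ l : List V, l.Nodup ∧ l.toFinset = T ∧ Burn E c l := by
  intro n
  induction n with
  | zero =>
    intro T hT _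
    exact ⟨[], by simp, by simpa using (Finset.card_eq_zero.mp hT).symm, trivial⟩
  | succ n ih =>
    intro T hT hq
    have hne : T.Nonempty := by rw [← Finset.card_pos, hT]; omega
    obtain ⟨i, hi, hdi⟩ := hc T hne hq
    obtain ⟨l, hnd, hts, hb⟩ := ih (T.erase i)
      (by rw [Finset.card_erase_of_mem hi, hT]; rfl)
      (fun j hj => hq j (Finset.mem_of_mem_erase hj))
    have hil : i ∉ l := by
      intro h
      have : i ∈ T.erase i := by rw [← hts]; simpa using h
      simp at this
    have hts' : (i :: l).toFinset = T := by
      simp only [List.toFinset_cons, hts]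
      exact Finset.insert_erase hi
    refine ⟨i :: l, by simp [hnd, hil], hts', ?_, hb⟩
    rw [hts']; exact hdi

lemma tightAt_eq_zero (E : Finset (Finset V)) {l : List V} {v : V} (hv : v ∉ l) :
    tightAt E l v = 0 := by
  induction l with
  | nil => rfl
  | cons i l ih =>
    simp only [List.mem_cons, not_or] at hv
    simp [tightAt, hv.1, ih hv.2]

lemma le_tightAt (E : Finset (Finset V)) (c : V → ℕ) :
    ∀ l : List V, Burn E c l → ∀ v ∈ l, c v ≤ tightAt E l v := by
  intro l
  induction l with
  | nil => intro _ v hv; simp at hv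
  | cons i l ih =>
    intro hb v hv
    rcases eq_or_ne v i with rfl | hvi
    · have ht : tightAt E (v :: l) v = degT E (v :: l).toFinset v - 1 := by simp [tightAt]
      have := hb.1
      omega
    · have ht : tightAt E (i :: l) v = tightAt E l v := by simp [tightAt, hvi]
      rw [ht]
      rcases List.mem_cons.mp hv with h | h
      · exact absurd h hvi
      · exact ih hb.2 v h

lemma tight_parking (E : Finset (Finset V)) (c : V → ℕ) :
    ∀ l : List V, Burn E c l → ∀ T : Finset V, T.Nonempty → T ⊆ l.toFinset →
      ∃ i ∈ T, tightAt E l i < degT E T i := by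
  intro l
  induction l with
  | nil =>
    intro _ T hTne hTs
    simp only [List.toFinset_nil, Finset.subset_empty] at hTs
    subst hTs
    exact absurd hTne (by simp)
  | cons j l ih =>
    intro hb T hTne hTs
    by_cases hj : j ∈ T
    · refine ⟨j, hj, ?_⟩
      have ht : tightAt E (j :: l) j = degT E (j :: l).toFinset j - 1 := by simp [tightAt]
      rw [ht]
      have h1 : 0 < degT E (j :: l).toFinset j := lt_of_le_of_lt (Nat.zero_le _) hb.1
      have h2 : degT E (j :: l).toFinset j ≤ degT E T j := degT_antitone E hTs j
      omega
    · have hTs' : T ⊆ l.toFinset := by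
        intro x hx
        have := hTs hx
        simp only [List.toFinset_cons, Finset.mem_insert] at this
        rcases this with rfl | h
        · exact absurd hx hj
        · exact h
      obtain ⟨i, hi, hlt⟩ := ih hb.2 T hTne hTs'
      refine ⟨i, hi, ?_⟩
      have : i ≠ j := fun h => hj (h ▸ hi)
      simpa [tightAt, this] using hlt

lemma sum_tightAt (E : Finset (Finset V)) (c : V → ℕ) :
    ∀ l : List V, l.Nodup → Burn E c l →
      (∑ v : V, tightAt E l v) + l.length = degSum E l := by
  intro l
  induction l with
  | nil => intro _ _; simp [tightAt, degSum]
  | cons i l ih =>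
    intro hnd hb
    have hil : i ∉ l := (List.nodup_cons.mp hnd).1
    have key : ∀ v : V, tightAt E (i :: l) v =
        (if v = i then degT E (i :: l).toFinset i - 1 else 0) + tightAt E l v := by
      intro v
      rcases eq_or_ne v i with rfl | hvi
      · simp [tightAt, tightAt_eq_zero E hil]
      · simp [tightAt, hvi]
    have hsum : ∑ v : V, tightAt E (i :: l) v =
        (degT E (i :: l).toFinset i - 1) + ∑ v : V, tightAt E l v := by
      simp only [key, Finset.sum_add_distrib, Finset.sum_ite_eq' Finset.univ i,
        Finset.mem_univ, if_pos]
    have hpos : 0 < degT E (i :: l).toFinset i := lt_of_le_of_lt (Nat.zero_le _) hb.1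
    have := ih (List.nodup_cons.mp hnd).2 hb.2
    simp only [degSum, List.length_cons, hsum]
    omega

lemma degT_as_sum (E : Finset (Finset V)) (T : Finset V) (i : V) :
    degT E T i = ∑ e ∈ E, (if i ∈ e ∧ ¬ e ⊆ T then 1 else 0) := by
  rw [degT, Finset.card_filter]

lemma degSum_eq (E : Finset (Finset V)) :
    ∀ l : List V, l.Nodup →
      degSum E l = ∑ e ∈ E, ((e ∩ l.toFinset).card - if e ⊆ l.toFinset then 1 else 0) := by
  intro l
  induction l with
  | nil =>
    intro _
    rw [degSum]
    symm
    apply Finset.sum_eq_zero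
    intro e _
    simp only [List.toFinset_nil]
    by_cases h : e ⊆ (∅ : Finset V) <;> simp [h]
  | cons i l ih =>
    intro hnd
    have hil : i ∉ l := (List.nodup_cons.mp hnd).1
    have hilt : i ∉ l.toFinset := by simpa using hil
    rw [degSum, ih (List.nodup_cons.mp hnd).2, degT_as_sum, ← Finset.sum_add_distrib]
    apply Finset.sum_congr rfl
    intro e _
    set S := l.toFinset with hS
    have hins : (i :: l).toFinset = insert i S := by simp [hS]
    rw [hins]
    by_cases hie : i ∈ e
    · have hnsub : ¬ e ⊆ S := fun h => hilt (h hie)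
      have hcard : (e ∩ insert i S).card = (e ∩ S).card + 1 := by
        have : e ∩ insert i S = insert i (e ∩ S) := by
          ext x
          simp only [Finset.mem_inter, Finset.mem_insert]
          constructor
          · rintro ⟨hx, rfl | hx2⟩
            · exact Or.inl rfl
            · exact Or.inr ⟨hx, hx2⟩
          · rintro (rfl | ⟨h1, h2⟩)
            · exact ⟨hie, Or.inl rfl⟩
            · exact ⟨h1, Or.inr h2⟩
        rw [this, Finset.card_insert_of_notMem (fun h => hilt (Finset.mem_inter.mp h).2)]
      by_cases hsub : e ⊆ insert i S
      · rw [if_pos hsub, if_neg hnsub, if_neg (by simp [hsub]), hcard]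
        omega
      · rw [if_neg hsub, if_neg hnsub, if_pos ⟨hie, hsub⟩, hcard]
        omega
    · have h1 : e ∩ insert i S = e ∩ S := by
        ext x
        simp only [Finset.mem_inter, Finset.mem_insert]
        constructor
        · rintro ⟨hx, rfl | hx2⟩
          · exact absurd hx hie
          · exact ⟨hx, hx2⟩
        · rintro ⟨hx, hx2⟩; exact ⟨hx, Or.inr hx2⟩
      have h2 : (e ⊆ insert i S) ↔ (e ⊆ S) := by
        constructor
        · intro h x hx
          rcases Finset.mem_insert.mp (h hx) with rfl | hxS
          · exact absurd hx hie
          · exact hxS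
        · intro h; exact h.trans (Finset.subset_insert _ _)
      simp [hie, h1, h2]

lemma maximal_degree (E : Finset (Finset V)) (q : V) (c : V → ℕ)
    (hc : IsMaximalHParking E q c) :
    (∑ i : V, c i) + (Finset.univ.erase q).card = ∑ e ∈ E, (e.card - 1) := by
  obtain ⟨hq0, hpark, hmax⟩ := hc
  obtain ⟨l, hnd, hts, hb⟩ := exists_burn E q c hpark (Finset.univ.erase q).card
    (Finset.univ.erase q) rfl (fun i hi => Finset.ne_of_mem_erase hi)
  -- the tight configuration
  set c' := tightAt E l with hc'
  have hql : q ∉ l := by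
    intro h
    have : q ∈ Finset.univ.erase q := by rw [← hts]; simpa using h
    simp at this
  have hq' : c' q = 0 := tightAt_eq_zero E hql
  have hpark' : IsHParking E q c' := by
    intro T hTne hTq
    apply tight_parking E c l hb T hTne
    rw [hts]
    intro x hx
    exact Finset.mem_erase.mpr ⟨hTq x hx, Finset.mem_univ x⟩
  have hle : c ≤ c' := by
    intro v
    by_cases hv : v ∈ l
    · exact le_tightAt E c l hb v hv
    · have hvq : v = q := by
        by_contra hne
        have : v ∈ Finset.univ.erase q := Finset.mem_erase.mpr ⟨hne, Finset.mem_univ v⟩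
        rw [← hts] at this
        exact hv (by simpa using this)
      rw [hvq, hq0, hq']
  have hcc : c' = c := hmax c' hq' hpark' hle
  have hlen : l.length = (Finset.univ.erase q).card := by
    rw [← hts, List.toFinset_card_of_nodup hnd]
  have hsum := sum_tightAt E c l hnd hb
  rw [degSum_eq E l hnd, hts] at hsum
  have hE : ∀ e ∈ E, (e ∩ Finset.univ.erase q).card -
      (if e ⊆ Finset.univ.erase q then 1 else 0) = e.card - 1 := by
    intro e _
    by_cases hqe : q ∈ e
    · have h1 : ¬ e ⊆ Finset.univ.erase q := by
        intro h
        have := h hqe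
        simp at this
      have h2 : e ∩ Finset.univ.erase q = e.erase q := by
        ext x
        simp only [Finset.mem_inter, Finset.mem_erase, Finset.mem_univ, and_true]
        tauto
      rw [h2, if_neg h1, Finset.card_erase_of_mem hqe]
      rfl
    · have h1 : e ⊆ Finset.univ.erase q := fun x hx =>
        Finset.mem_erase.mpr ⟨fun h => hqe (h ▸ hx), Finset.mem_univ x⟩
      have h2 : e ∩ Finset.univ.erase q = e := Finset.inter_eq_left.mpr h1
      rw [h2, if_pos h1]
    -- e.card - 1 matches
  rw [Finset.sum_congr rfl hE] at hsum
  rw [← hsum, ← hlen, ← hcc]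

end Aux

/-- For a connected hypergraph `H` with sink `q`, the set of `H`-parking functions is an
order ideal (downward closed), and all maximal `H`-parking functions have the same degree
(sum of entries); hence the degree sequence of `H`-parking functions is a pure `O`-sequence. -/
theorem maximalHParking_same_degree {V : Type*} [Fintype V] [DecidableEq V]
    (E : Finset (Finset V)) (q : V) (hconn : HConnected E) :
    (∀ c c' : V → ℕ, IsHParking E q c' → (∀ i, c i ≤ c' i) → IsHParking E q c) ∧
    (∀ c c' : V → ℕ, IsMaximalHParking E q c → IsMaximalHParking E q c' →
      ∑ i : V, c i = ∑ i : V, c' i) := by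
  constructor
  · intro c c' hc' hle T hTne hTq
    obtain ⟨i, hi, hlt⟩ := hc' T hTne hTq
    exact ⟨i, hi, lt_of_le_of_lt (hle i) hlt⟩
  · intro c c' hc hc'
    have h1 := maximal_degree E q c hc
    have h2 := maximal_degree E q c' hc'
    omega
end

section
/- The H-parking functions of the complete d-uniform hypergraph K_{n+1}^d (with any fixed sink) are exactly the u-parking functions for the vector u = (u_1,...,u_n), where u_k = C(n,d-1) − C(n−k,d-1) for 1 ≤ k ≤ n+1−d and u_k = C(n,d-1) for n−d+2 ≤ k ≤ n. -/
open scoped Classical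

/-- Edge set of the complete `d`-uniform hypergraph on the vertex type `V`. -/
def completeEdges (V : Type*) [Fintype V] [DecidableEq V] (d : ℕ) : Finset (Finset V) :=
  Finset.univ.powersetCard d

/-- `c` is a `u`-parking function: some nondecreasing rearrangement of `c` is
coordinatewise strictly below `u`. -/
def IsUParking {n : ℕ} (u c : Fin n → ℕ) : Prop :=
  ∃ σ : Equiv.Perm (Fin n), Monotone (fun i => c (σ i)) ∧ ∀ i, c (σ i) < u i

lemma count_contain {V : Type*} [DecidableEq V] (s : Finset V) (i : V) (hi : i ∈ s)
    {d : ℕ} (hd : 1 ≤ d) :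
    ((s.powersetCard d).filter (fun e => i ∈ e)).card = (s.card - 1).choose (d - 1) := by
  have h1 : ((s.erase i).powersetCard (d-1)).card = (s.card - 1).choose (d-1) := by
    rw [Finset.card_powersetCard, Finset.card_erase_of_mem hi]
  rw [← h1]
  refine Finset.card_bij' (fun e _ => e.erase i) (fun a _ => insert i a) ?_ ?_ ?_ ?_
  · intro e he
    simp only [Finset.mem_filter, Finset.mem_powersetCard] at he
    obtain ⟨⟨hes, hec⟩, hie⟩ := he
    simp only [Finset.mem_powersetCard]
    exact ⟨Finset.erase_subset_erase i hes, by rw [Finset.card_erase_of_mem hie, hec]⟩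
  · intro a ha
    simp only [Finset.mem_powersetCard] at ha
    obtain ⟨has, hac⟩ := ha
    have hia : i ∉ a := fun h => (Finset.mem_erase.mp (has h)).1 rfl
    simp only [Finset.mem_filter, Finset.mem_powersetCard]
    refine ⟨⟨?_, ?_⟩, Finset.mem_insert_self i a⟩
    · exact Finset.insert_subset hi (has.trans (Finset.erase_subset i s))
    · rw [Finset.card_insert_of_notMem hia, hac]; omega
  · intro e he
    simp only [Finset.mem_filter] at he
    exact Finset.insert_erase he.2
  · intro a ha
    simp only [Finset.mem_powersetCard] at ha
    have hia : i ∉ a := fun h => (Finset.mem_erase.mp (ha.1 h)).1 rfl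
    exact Finset.erase_insert hia

lemma degT_complete {V : Type*} [Fintype V] [DecidableEq V] {n d : ℕ}
    (hV : Fintype.card V = n + 1) (hd : 1 ≤ d) (T : Finset V) (i : V) (hi : i ∈ T) :
    degT (completeEdges V d) T i = n.choose (d-1) - (T.card - 1).choose (d-1) := by
  have key := Finset.card_filter_add_card_filter_not
    (s := (Finset.univ.powersetCard d).filter (fun e : Finset V => i ∈ e))
    (p := fun e => e ⊆ T)
  have htot : (((Finset.univ : Finset V).powersetCard d).filter (fun e => i ∈ e)).card
      = n.choose (d-1) := by
    rw [count_contain _ i (Finset.mem_univ i) hd, Finset.card_univ, hV]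
    simp
  have hsub : ((((Finset.univ : Finset V).powersetCard d).filter (fun e => i ∈ e)).filter
        (fun e => e ⊆ T)).card = (T.card - 1).choose (d-1) := by
    have heq : (((Finset.univ : Finset V).powersetCard d).filter (fun e => i ∈ e)).filter
        (fun e => e ⊆ T) = (T.powersetCard d).filter (fun e => i ∈ e) := by
      ext e
      simp only [Finset.mem_filter, Finset.mem_powersetCard, Finset.subset_univ, true_and]
      tauto
    rw [heq, count_contain T i hi hd]
  have hdeg : degT (completeEdges V d) T i
      = ((((Finset.univ : Finset V).powersetCard d).filter (fun e => i ∈ e)).filter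
          (fun e => ¬ e ⊆ T)).card := by
    unfold degT completeEdges
    congr 1
    rw [Finset.filter_filter]
  rw [hdeg]
  omega

lemma u_collapse {n d : ℕ} (hd : 2 ≤ d) (hdn : d ≤ n + 1) (k : ℕ) :
    (if k + 1 ≤ n + 1 - d then n.choose (d-1) - (n - (k+1)).choose (d-1) else n.choose (d-1))
      = n.choose (d-1) - (n - (k+1)).choose (d-1) := by
  split
  · rfl
  · next h =>
    have : n - (k+1) < d - 1 := by omega
    rw [Nat.choose_eq_zero_of_lt this, Nat.sub_zero]

/-- The `H`-parking functions of the complete hypergraph `K_{n+1}^d` (with any fixed sink `q`)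
are exactly the `u`-parking functions for
`u_k = C(n,d-1) − C(n−k,d-1)` for `1 ≤ k ≤ n+1−d` and `u_k = C(n,d-1)` otherwise. -/
theorem hparking_complete_iff_uparking {V : Type*} [Fintype V] [DecidableEq V]
    {n d : ℕ} (hV : Fintype.card V = n + 1) (hd : 2 ≤ d) (hdn : d ≤ n + 1)
    (q : V) (ι : Fin n ≃ {v : V // v ≠ q}) (c : V → ℕ) (hcq : c q = 0) :
    IsHParking (completeEdges V d) q c ↔
      IsUParking
        (fun k : Fin n =>
          if (k : ℕ) + 1 ≤ n + 1 - d then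
            Nat.choose n (d - 1) - Nat.choose (n - ((k : ℕ) + 1)) (d - 1)
          else Nat.choose n (d - 1))
        (fun i => c (ι i).1) := by
  have hd1 : 1 ≤ d := by omega
  set b : Fin n → ℕ := fun i => c (ι i).1 with hb
  have hinj : Function.Injective (fun j : Fin n => (ι j).1) :=
    fun a b h => ι.injective (Subtype.ext h)
  constructor
  · intro hpark
    refine ⟨Tuple.sort b, Tuple.monotone_sort b, ?_⟩
    intro k
    set σ := Tuple.sort b
    set T : Finset V := (Finset.Ici k).image (fun j => (ι (σ j)).1) with hT
    have hTcard : T.card = n - k := by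
      have hinj2 : Function.Injective (fun j : Fin n => (ι (σ j)).1) :=
        fun a b h => σ.injective (hinj h)
      rw [hT, Finset.card_image_of_injective _ hinj2, Fin.card_Ici]
    have hTne : T.Nonempty := ⟨(ι (σ k)).1, Finset.mem_image.mpr ⟨k, Finset.mem_Ici.mpr le_rfl, rfl⟩⟩
    have hTq : ∀ i ∈ T, i ≠ q := by
      intro i hi
      obtain ⟨j, _, rfl⟩ := Finset.mem_image.mp hi
      exact (ι (σ j)).2
    obtain ⟨i, hiT, hlt⟩ := hpark T hTne hTq
    obtain ⟨j, hj, rfl⟩ := Finset.mem_image.mp hiT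
    rw [degT_complete hV hd1 T _ hiT, hTcard] at hlt
    have hmono : b (σ k) ≤ b (σ j) := Tuple.monotone_sort b (Finset.mem_Ici.mp hj)
    have : b (σ k) < n.choose (d-1) - (n - k - 1).choose (d-1) := lt_of_le_of_lt hmono hlt
    show b (σ k) < if (k : ℕ) + 1 ≤ n + 1 - d then
        Nat.choose n (d - 1) - Nat.choose (n - ((k : ℕ) + 1)) (d - 1)
      else Nat.choose n (d - 1)
    rw [u_collapse hd hdn]
    have hnk : n - ((k : ℕ) + 1) = n - k - 1 := by omega
    rw [hnk]
    exact this
  · rintro ⟨σ, hm, hbound⟩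
    intro T hTne hTq
    set A : Finset (Fin n) := Finset.univ.filter (fun a => (ι a).1 ∈ T) with hA
    have hAcard : A.card = T.card := by
      apply Finset.card_bij (fun a _ => (ι a).1)
      · intro a ha
        exact (Finset.mem_filter.mp ha).2
      · intro a _ a' _ h
        exact hinj h
      · intro v hv
        refine ⟨ι.symm ⟨v, hTq v hv⟩, ?_, by simp⟩
        rw [hA, Finset.mem_filter]
        refine ⟨Finset.mem_univ _, ?_⟩
        simp [hv]
    set t := T.card with ht
    have ht1 : 1 ≤ t := Finset.card_pos.mpr hTne
    have htn : t ≤ n := by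
      rw [← hAcard]
      simpa using Finset.card_le_card (Finset.subset_univ A)
    set S : Finset (Fin n) := A.image σ.symm with hS
    have hScard : S.card = t := by
      rw [hS, Finset.card_image_of_injective _ σ.symm.injective, hAcard]
    have hmemS : ∀ k : Fin n, k ∈ S → (ι (σ k)).1 ∈ T := by
      intro k hk
      obtain ⟨a, ha, rfl⟩ := Finset.mem_image.mp hk
      simp only [Equiv.apply_symm_apply]
      exact (Finset.mem_filter.mp ha).2
    -- pigeonhole: some j ∈ S with (j : ℕ) ≤ n - t
    have hpig : ∃ j ∈ S, (j : ℕ) ≤ n - t := by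
      by_contra hcon
      push_neg at hcon
      have hnt : n - t < n := by omega
      have hsubI : S ⊆ Finset.Ioi (⟨n - t, hnt⟩ : Fin n) := by
        intro j hj
        rw [Finset.mem_Ioi]
        exact hcon j hj
      have := Finset.card_le_card hsubI
      rw [hScard, Fin.card_Ioi] at this
      simp only at this
      omega
    obtain ⟨j, hjS, hjle⟩ := hpig
    have hnt : n - t < n := by omega
    set j' : Fin n := ⟨n - t, hnt⟩ with hj'
    have hle : j ≤ j' := hjle
    refine ⟨(ι (σ j)).1, hmemS j hjS, ?_⟩
    rw [degT_complete hV hd1 T _ (hmemS j hjS)]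
    have h1 : b (σ j) ≤ b (σ j') := hm hle
    have h2 : b (σ j') < if ((j' : ℕ)) + 1 ≤ n + 1 - d then
        Nat.choose n (d - 1) - Nat.choose (n - ((j' : ℕ) + 1)) (d - 1)
      else Nat.choose n (d - 1) := hbound j'
    rw [u_collapse hd hdn] at h2
    have h3 : n - ((j' : ℕ) + 1) = t - 1 := by
      simp only [hj']
      omega
    rw [h3] at h2
    calc c (ι (σ j)).1 = b (σ j) := rfl
      _ ≤ b (σ j') := h1
      _ < n.choose (d-1) - (t-1).choose (d-1) := h2
      _ = n.choose (d-1) - (T.card - 1).choose (d-1) := by rw [← ht]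
end

section
/- The number of maximal H-parking functions of the complete hypergraph K_{n+1}^d equals n!/(d−1)!. -/
set_option linter.unusedSectionVars false
set_option maxHeartbeats 1000000

open scoped Classical

namespace HPark

variable {V : Type*} [Fintype V] [DecidableEq V]

lemma choose_lt {a b r : ℕ} (hr : 1 ≤ r) (hrb : r ≤ b + 1) (hab : a ≤ b) :
    a.choose r < (b + 1).choose r := by
  obtain ⟨s, rfl⟩ : ∃ s, r = s + 1 := ⟨r - 1, by omega⟩
  have h1 : a.choose (s + 1) ≤ b.choose (s + 1) := Nat.choose_le_choose _ hab
  have h2 : 0 < b.choose s := Nat.choose_pos (by omega)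
  have h3 : (b + 1).choose (s + 1) = b.choose s + b.choose (s + 1) := Nat.choose_succ_succ b s
  omega


lemma mem_drop_of_indexOf_ge {α : Type*} [DecidableEq α] {l : List α} {v : α} (hv : v ∈ l)
    {k : ℕ} (hk : k ≤ l.idxOf v) : v ∈ l.drop k := by
  have hlt : l.idxOf v < l.length := List.idxOf_lt_length_iff.2 hv
  have hsum : k + (l.idxOf v - k) < l.length := by omega
  have h2 := List.getElem_drop' (xs := l) (i := k) (j := l.idxOf v - k) hsum
  have h3 : l[k + (l.idxOf v - k)]'hsum = v := by
    have he : k + (l.idxOf v - k) = l.idxOf v := by omega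
    simp only [he]
    exact List.getElem_idxOf hlt
  rw [h3] at h2
  rw [h2]
  exact List.getElem_mem _

/-- number of `d`-subsets of `s` containing a fixed `i ∈ s`. -/
lemma card_filter_mem (s : Finset V) {d : ℕ} (hd : 1 ≤ d) {i : V} (hi : i ∈ s) :
    ((s.powersetCard d).filter fun e => i ∈ e).card = (s.card - 1).choose (d - 1) := by
  rw [← Finset.card_erase_of_mem hi, ← Finset.card_powersetCard]
  apply Finset.card_nbij' (fun e => e.erase i) (fun t => insert i t)
  · intro e he
    simp only [Finset.mem_coe, Finset.mem_filter, Finset.mem_powersetCard] at he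
    obtain ⟨⟨hsub, hcard⟩, hie⟩ := he
    rw [Finset.mem_coe, Finset.mem_powersetCard]
    constructor
    · intro x hx
      rw [Finset.mem_erase] at hx ⊢
      exact ⟨hx.1, hsub hx.2⟩
    · rw [Finset.card_erase_of_mem hie, hcard]
  · intro t ht
    rw [Finset.mem_coe, Finset.mem_powersetCard] at ht
    obtain ⟨hsub, hcard⟩ := ht
    have hit : i ∉ t := fun h => (Finset.mem_erase.1 (hsub h)).1 rfl
    simp only [Finset.mem_coe, Finset.mem_filter, Finset.mem_powersetCard]
    refine ⟨⟨?_, ?_⟩, Finset.mem_insert_self _ _⟩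
    · intro x hx
      rcases Finset.mem_insert.1 hx with rfl | hx
      · exact hi
      · exact (Finset.mem_erase.1 (hsub hx)).2
    · rw [Finset.card_insert_of_notMem hit, hcard]
      omega
  · intro e he
    simp only [Finset.mem_coe, Finset.mem_filter] at he
    exact Finset.insert_erase he.2
  · intro t ht
    rw [Finset.mem_coe, Finset.mem_powersetCard] at ht
    have hit : i ∉ t := fun h => (Finset.mem_erase.1 (ht.1 h)).1 rfl
    exact Finset.erase_insert hit

lemma degT_complete {n d : ℕ} (hV : Fintype.card V = n + 1) (hd : 2 ≤ d)
    {T : Finset V} {i : V} (hi : i ∈ T) :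
    degT (completeEdges V d) T i = n.choose (d - 1) - (T.card - 1).choose (d - 1) := by
  classical
  unfold degT completeEdges
  have h1 : ((Finset.univ.powersetCard d (α := V)).filter fun e => i ∈ e).card
      = n.choose (d - 1) := by
    rw [card_filter_mem Finset.univ (by omega) (Finset.mem_univ i), Finset.card_univ, hV]
    simp
  have hsplit :
      (((Finset.univ.powersetCard d (α := V)).filter fun e => i ∈ e).filter
          fun e => e ⊆ T).card +
        (((Finset.univ.powersetCard d (α := V)).filter fun e => i ∈ e).filter
          fun e => ¬ e ⊆ T).card
      = ((Finset.univ.powersetCard d (α := V)).filter fun e => i ∈ e).card :=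
    Finset.card_filter_add_card_filter_not _
  have h2 : (((Finset.univ.powersetCard d (α := V)).filter fun e => i ∈ e).filter
      fun e => e ⊆ T) = (T.powersetCard d).filter fun e => i ∈ e := by
    ext e
    simp only [Finset.mem_filter, Finset.mem_powersetCard]
    constructor
    · rintro ⟨⟨⟨-, hc⟩, hie⟩, hsub⟩
      exact ⟨⟨hsub, hc⟩, hie⟩
    · rintro ⟨⟨hsub, hc⟩, hie⟩
      exact ⟨⟨⟨Finset.subset_univ _, hc⟩, hie⟩, hsub⟩
  have h3 : ((T.powersetCard d).filter fun e => i ∈ e).card = (T.card - 1).choose (d - 1) :=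
    card_filter_mem T (by omega) hi
  have h4 : ((Finset.univ.powersetCard d (α := V)).filter fun e => i ∈ e ∧ ¬ e ⊆ T)
      = (((Finset.univ.powersetCard d (α := V)).filter fun e => i ∈ e).filter
          fun e => ¬ e ⊆ T) := by
    rw [Finset.filter_filter]
  rw [h4]
  rw [h2, h3] at hsplit
  omega

lemma burn_aux {E : Finset (Finset V)} {q : V} {c : V → ℕ} (hc : IsHParking E q c) :
    ∀ (m : ℕ) (S : Finset V), S.card = m → q ∉ S →
      ∃ l : List V, l.Nodup ∧ l.toFinset = S ∧
        ∀ (k : ℕ) (hk : k < l.length),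
          c (l.get ⟨k, hk⟩) < degT E ((l.drop k).toFinset) (l.get ⟨k, hk⟩) := by
  intro m
  induction m with
  | zero =>
    intro S hS _
    refine ⟨[], by simp, by simpa using (Finset.card_eq_zero.1 hS).symm, ?_⟩
    intro k hk; simp at hk
  | succ m ih =>
    intro S hS hq
    have hne : S.Nonempty := by
      rw [← Finset.card_pos, hS]; omega
    obtain ⟨i, hiS, hilt⟩ := hc S hne (fun j hj => fun h => hq (h ▸ hj))
    obtain ⟨l', hnd', hfin', hlt'⟩ := ih (S.erase i)
      (by rw [Finset.card_erase_of_mem hiS, hS]; omega)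
      (fun h => hq (Finset.mem_of_mem_erase h))
    refine ⟨i :: l', ?_, ?_, ?_⟩
    · refine List.nodup_cons.2 ⟨?_, hnd'⟩
      rw [← List.mem_toFinset, hfin']
      exact fun h => (Finset.mem_erase.1 h).1 rfl
    · rw [List.toFinset_cons, hfin', Finset.insert_erase hiS]
    · intro k hk
      cases k with
      | zero =>
        simpa [hfin', Finset.insert_erase hiS] using hilt
      | succ k =>
        have hk' : k < l'.length := by simpa using hk
        simpa using hlt' k hk'

/-- The candidate maximal parking function attached to a list. -/
noncomputable def cstarL (q : V) (n d : ℕ) (l : List V) : V → ℕ :=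
  fun v => if v = q then 0 else
    n.choose (d - 1) - (n - 1 - l.idxOf v).choose (d - 1) - 1

section Main

variable {n d : ℕ} (hV : Fintype.card V = n + 1) (hd : 2 ≤ d) (hdn : d ≤ n + 1) (q : V)

/-- Properties of a "good" list. -/
def GoodList (q : V) (n : ℕ) (l : List V) : Prop :=
  l.Nodup ∧ l.toFinset = Finset.univ.erase q ∧ l.length = n

include hV in
lemma goodList_length {l : List V} (hnd : l.Nodup)
    (hfin : l.toFinset = Finset.univ.erase q) : l.length = n := by
  have := List.toFinset_card_of_nodup hnd
  rw [hfin, Finset.card_erase_of_mem (Finset.mem_univ q), Finset.card_univ, hV] at this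
  omega

include hV hd hdn in
lemma choose_small_lt {k : ℕ} (hk : k < n) :
    (n - 1 - k).choose (d - 1) < n.choose (d - 1) := by
  have h := choose_lt (a := n - 1 - k) (b := n - 1) (r := d - 1)
    (by omega) (by omega) (by omega)
  have hn : n - 1 + 1 = n := by omega
  rwa [hn] at h

include hV hd hdn in
lemma le_cstar {c : V → ℕ} (hq : c q = 0) (hc : IsHParking (completeEdges V d) q c) :
    ∃ l : List V, GoodList q n l ∧ c ≤ cstarL q n d l := by
  obtain ⟨l, hnd, hfin, hlt⟩ := burn_aux hc (Finset.univ.erase q).card (Finset.univ.erase q)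
    rfl (fun h => (Finset.mem_erase.1 h).1 rfl)
  have hlen : l.length = n := goodList_length hV q hnd hfin
  refine ⟨l, ⟨hnd, hfin, hlen⟩, ?_⟩
  intro v
  by_cases hvq : v = q
  · subst hvq; simp [cstarL, hq]
  · have hvl : v ∈ l := by
      rw [← List.mem_toFinset, hfin]
      exact Finset.mem_erase.2 ⟨hvq, Finset.mem_univ v⟩
    have hk : l.idxOf v < l.length := List.idxOf_lt_length_iff.2 hvl
    have hget : l.get ⟨l.idxOf v, hk⟩ = v := List.idxOf_get hk
    have h1 := hlt (l.idxOf v) hk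
    rw [hget] at h1
    set k := l.idxOf v with hkdef
    have hdropnd : (l.drop k).Nodup := hnd.sublist (List.drop_sublist k l)
    have hmem : v ∈ (l.drop k).toFinset :=
      List.mem_toFinset.2 (mem_drop_of_indexOf_ge hvl (le_refl _))
    have hcard : (l.drop k).toFinset.card = n - k := by
      rw [List.toFinset_card_of_nodup hdropnd, List.length_drop, hlen]
    rw [degT_complete hV hd hmem, hcard] at h1
    have hchoose : (n - 1 - k).choose (d - 1) = (n - k - 1).choose (d - 1) := by
      congr 1; omega
    simp only [cstarL, if_neg hvq, ← hkdef]
    omega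

include hV hd hdn in
lemma cstar_parking {l : List V} (hl : GoodList q n l) :
    IsHParking (completeEdges V d) q (cstarL q n d l) := by
  obtain ⟨hnd, hfin, hlen⟩ := hl
  intro T hT hTq
  -- minimal index of an element of T
  obtain ⟨v₀, hv₀T, hv₀min⟩ := T.exists_min_image (fun v => l.idxOf v) hT
  have hv₀l : v₀ ∈ l := by
    rw [← List.mem_toFinset, hfin]
    exact Finset.mem_erase.2 ⟨hTq v₀ hv₀T, Finset.mem_univ v₀⟩
  set k := l.idxOf v₀ with hkdef
  have hkn : k < l.length := List.idxOf_lt_length_iff.2 hv₀l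
  have hsub : T ⊆ (l.drop k).toFinset := by
    intro v hv
    have hvl : v ∈ l := by
      rw [← List.mem_toFinset, hfin]
      exact Finset.mem_erase.2 ⟨hTq v hv, Finset.mem_univ v⟩
    have hvk : k ≤ l.idxOf v := hv₀min v hv
    have hvlt : l.idxOf v < l.length := List.idxOf_lt_length_iff.2 hvl
    exact List.mem_toFinset.2 (mem_drop_of_indexOf_ge hvl hvk)
  have hTcard : T.card ≤ n - k := by
    have := Finset.card_le_card hsub
    rwa [List.toFinset_card_of_nodup (hnd.sublist (List.drop_sublist k l)),
      List.length_drop, hlen] at this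
  refine ⟨v₀, hv₀T, ?_⟩
  rw [degT_complete hV hd hv₀T]
  have hlt1 : (n - 1 - k).choose (d - 1) < n.choose (d - 1) :=
    choose_small_lt hV hd hdn (by omega)
  have hmono : (T.card - 1).choose (d - 1) ≤ (n - 1 - k).choose (d - 1) :=
    Nat.choose_le_choose _ (by omega)
  simp only [cstarL, if_neg (hTq v₀ hv₀T), ← hkdef]
  omega

include hV in
lemma sum_cstar {l : List V} (hl : GoodList q n l) :
    ∑ v, cstarL q n d l v =
      ∑ k ∈ Finset.range n, (n.choose (d - 1) - (n - 1 - k).choose (d - 1) - 1) := by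
  obtain ⟨hnd, hfin, hlen⟩ := hl
  have h0 : ∑ v ∈ Finset.univ.erase q, cstarL q n d l v + cstarL q n d l q
      = ∑ v, cstarL q n d l v := Finset.sum_erase_add _ _ (Finset.mem_univ q)
  have hq0 : cstarL q n d l q = 0 := by simp [cstarL]
  rw [← h0, hq0, Nat.add_zero, ← hfin]
  apply Finset.sum_nbij' (fun v => l.idxOf v) (fun k => l.getD k q)
  · intro v hv
    rw [List.mem_toFinset] at hv
    rw [Finset.mem_range, ← hlen]
    exact List.idxOf_lt_length_iff.2 hv
  · intro k hk
    rw [Finset.mem_range, ← hlen] at hk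
    rw [List.mem_toFinset, List.getD_eq_getElem l q hk]
    exact List.getElem_mem hk
  · intro v hv
    rw [List.mem_toFinset] at hv
    have hlt := List.idxOf_lt_length_iff.2 hv
    rw [List.getD_eq_getElem l q hlt]
    exact List.getElem_idxOf hlt
  · intro k hk
    rw [Finset.mem_range, ← hlen] at hk
    rw [List.getD_eq_getElem l q hk]
    exact List.Nodup.idxOf_getElem hnd k hk
  · intro v hv
    have hv' : v ∈ l.toFinset := by simpa using hv
    have hvq : v ≠ q := (Finset.mem_erase.1 (hfin ▸ hv')).1
    simp [cstarL, hvq]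

include hV hd hdn in
lemma cstar_maximal {l : List V} (hl : GoodList q n l) :
    IsMaximalHParking (completeEdges V d) q (cstarL q n d l) := by
  refine ⟨by simp [cstarL], cstar_parking hV hd hdn q hl, ?_⟩
  intro c' hq' hc' hle
  obtain ⟨l', hl', hle'⟩ := le_cstar hV hd hdn q hq' hc'
  have hsum1 : ∑ v, c' v ≤ ∑ v, cstarL q n d l' v :=
    Finset.sum_le_sum (fun v _ => hle' v)
  have hsum2 : ∑ v, cstarL q n d l v ≤ ∑ v, c' v :=
    Finset.sum_le_sum (fun v _ => hle v)
  rw [sum_cstar hV q hl'] at hsum1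
  rw [sum_cstar hV q hl] at hsum2
  have hs3 : ∑ v, cstarL q n d l v
      = ∑ k ∈ Finset.range n, (n.choose (d - 1) - (n - 1 - k).choose (d - 1) - 1) :=
    sum_cstar hV q hl
  have heq : ∑ v, cstarL q n d l v = ∑ v, c' v := by omega
  funext v
  exact ((Finset.sum_eq_sum_iff_of_le (fun v _ => hle v)).1 heq v (Finset.mem_univ v)).symm

include hV hd hdn in
lemma maximal_iff {c : V → ℕ} :
    IsMaximalHParking (completeEdges V d) q c ↔
      ∃ l : List V, GoodList q n l ∧ c = cstarL q n d l := by
  constructor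
  · rintro ⟨hq0, hpark, hmax⟩
    obtain ⟨l, hl, hle⟩ := le_cstar hV hd hdn q hq0 hpark
    refine ⟨l, hl, ?_⟩
    exact (hmax (cstarL q n d l) (by simp [cstarL])
      (cstar_parking hV hd hdn q hl) hle).symm
  · rintro ⟨l, hl, rfl⟩
    exact cstar_maximal hV hd hdn q hl


include hd hdn in
lemma w_eq_cases {j k : ℕ} (hj : j < n) (hk : k < n) (hjk : j < k)
    (hC : (n - 1 - j).choose (d - 1) = (n - 1 - k).choose (d - 1)) :
    (n - 1 - k).choose (d - 1) = 0 := by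
  by_contra h
  have hpos : 0 < (n - 1 - k).choose (d - 1) := Nat.pos_of_ne_zero h
  have hle : d - 1 ≤ n - 1 - k := by
    by_contra hh
    exact h (Nat.choose_eq_zero_iff.2 (by omega))
  have hlt := choose_lt (a := n - 1 - k) (b := n - 1 - j - 1) (r := d - 1)
    (by omega) (by omega) (by omega)
  rw [show n - 1 - j - 1 + 1 = n - 1 - j from by omega] at hlt
  omega

/-- The equivalence `Fin n ≃ {v // v ≠ q}` induced by a good list. -/
noncomputable def listEquiv (q : V) (n : ℕ) (l : List V) (hl : GoodList q n l) :
    Fin n ≃ {v : V // v ≠ q} where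
  toFun k := ⟨l.get ⟨k.1, by rw [hl.2.2]; exact k.2⟩, by
    have hm : l.get ⟨k.1, by rw [hl.2.2]; exact k.2⟩ ∈ l := List.get_mem _ _
    have hm2 := (Finset.ext_iff.1 hl.2.1 _).1 (List.mem_toFinset.2 hm)
    exact (Finset.mem_erase.1 hm2).1⟩
  invFun v := ⟨l.idxOf v.1, by
    rw [← hl.2.2]
    refine List.idxOf_lt_length_iff.2 ?_
    rw [← List.mem_toFinset, hl.2.1]
    exact Finset.mem_erase.2 ⟨v.2, Finset.mem_univ _⟩⟩
  left_inv k := by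
    apply Fin.ext
    simp [List.get_eq_getElem, List.Nodup.idxOf_getElem hl.1]
  right_inv v := by
    apply Subtype.ext
    exact List.idxOf_get _

lemma listEquiv_coe (q : V) (n : ℕ) (l : List V) (hl : GoodList q n l) (k : Fin n) :
    ((listEquiv q n l hl k) : V) = l.get ⟨k.1, by rw [hl.2.2]; exact k.2⟩ := rfl

lemma listEquiv_indexOf (q : V) (n : ℕ) (l : List V) (hl : GoodList q n l) (k : Fin n) :
    l.idxOf ((listEquiv q n l hl k) : V) = k.1 := by
  rw [listEquiv_coe]
  simp [List.get_eq_getElem, List.Nodup.idxOf_getElem hl.1]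

lemma listEquiv_symm_coe (q : V) (n : ℕ) (l : List V) (hl : GoodList q n l)
    (v : {v : V // v ≠ q}) :
    (((listEquiv q n l hl).symm v) : ℕ) = l.idxOf v.1 := rfl

end Main

/-- Permutations act on `ℕ`-valued functions by precomposition with the inverse. -/
def permAct (α : Type*) : MulAction (Equiv.Perm α) (α → ℕ) where
  smul σ f := f ∘ σ.symm
  one_smul f := rfl
  mul_smul σ τ f := rfl


end HPark

/-- The number of maximal `H`-parking functions of the complete hypergraph `K_{n+1}^d`
equals `n!/(d−1)!`. -/
theorem card_maximalHParking_complete {V : Type*} [Fintype V] [DecidableEq V]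
    {n d : ℕ} (hV : Fintype.card V = n + 1) (hd : 2 ≤ d) (hdn : d ≤ n + 1) (q : V) :
    Nat.card {c : V → ℕ // IsMaximalHParking (completeEdges V d) q c} =
      Nat.factorial n / Nat.factorial (d - 1) := by
  classical
  have hn1 : 1 ≤ n := by omega
  set N := n.choose (d - 1) with hN
  set w : ℕ → ℕ := fun k => N - (n - 1 - k).choose (d - 1) - 1 with hw
  -- the base good list
  set l₀ : List V := (Finset.univ.erase q).toList with hl₀def
  have hl₀nd : l₀.Nodup := Finset.nodup_toList _
  have hl₀fin : l₀.toFinset = Finset.univ.erase q := Finset.toList_toFinset _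
  have hl₀ : HPark.GoodList q n l₀ :=
    ⟨hl₀nd, hl₀fin, HPark.goodList_length hV q hl₀nd hl₀fin⟩
  letI : MulAction (Equiv.Perm {v : V // v ≠ q}) ({v : V // v ≠ q} → ℕ) :=
    HPark.permAct {v : V // v ≠ q}
  set f₀ : {v : V // v ≠ q} → ℕ := fun v => HPark.cstarL q n d l₀ v.1 with hf₀
  have hcstar_ne : ∀ (l : List V) (v : V) (hv : v ≠ q),
      HPark.cstarL q n d l v = w (l.idxOf v) := by
    intro l v hv
    simp [HPark.cstarL, hv, hw, hN]
  have hf₀w : ∀ v : {v : V // v ≠ q}, f₀ v = w (l₀.idxOf v.1) := fun v =>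
    hcstar_ne l₀ v.1 v.2
  have hidxlt : ∀ v : {v : V // v ≠ q}, l₀.idxOf v.1 < n := by
    intro v
    rw [← hl₀.2.2]
    refine List.idxOf_lt_length_iff.2 ?_
    rw [← List.mem_toFinset, hl₀fin]
    exact Finset.mem_erase.2 ⟨v.2, Finset.mem_univ _⟩
  have hCk : ∀ k, k < n → (n - 1 - k).choose (d - 1) < N :=
    fun k hk => HPark.choose_small_lt hV hd hdn hk
  have hweq : ∀ j k, j < n → k < n → w j = w k →
      (n - 1 - j).choose (d - 1) = (n - 1 - k).choose (d - 1) := by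
    intro j k hj hk h
    have h1 := hCk j hj
    have h2 := hCk k hk
    simp only [hw] at h
    omega
  have hwzero : ∀ j k, j < n → k < n → j ≠ k → w j = w k →
      (n - 1 - j).choose (d - 1) = 0 ∧ (n - 1 - k).choose (d - 1) = 0 := by
    intro j k hj hk hne h
    have hC := hweq j k hj hk h
    rcases Nat.lt_or_ge j k with hjk | hjk
    · have := HPark.w_eq_cases hd hdn hj hk hjk hC
      omega
    · have hkj : k < j := by omega
      have := HPark.w_eq_cases hd hdn hk hj hkj hC.symm
      omega
  have hwmax : ∀ k, k < n → (w k = N - 1 ↔ (n - 1 - k).choose (d - 1) = 0) := by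
    intro k hk
    have h1 := hCk k hk
    simp only [hw]
    omega
  -- characterization via the orbit
  have main : ∀ c : V → ℕ, IsMaximalHParking (completeEdges V d) q c ↔
      (c q = 0 ∧ (fun v : {v : V // v ≠ q} => c v.1) ∈
        MulAction.orbit (Equiv.Perm {v : V // v ≠ q}) f₀) := by
    intro c
    rw [HPark.maximal_iff hV hd hdn q]
    constructor
    · rintro ⟨l, hl, rfl⟩
      refine ⟨by simp [HPark.cstarL], ?_⟩
      refine MulAction.mem_orbit_iff.2
        ⟨((HPark.listEquiv q n l hl).symm.trans (HPark.listEquiv q n l₀ hl₀)).symm, ?_⟩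
      funext v
      show f₀ (HPark.listEquiv q n l₀ hl₀ ((HPark.listEquiv q n l hl).symm v))
          = HPark.cstarL q n d l v.1
      rw [hf₀w, HPark.listEquiv_indexOf, hcstar_ne l v.1 v.2,
        ← HPark.listEquiv_symm_coe q n l hl v]
    · rintro ⟨hq0, horb⟩
      obtain ⟨σ, hσ⟩ := MulAction.mem_orbit_iff.1 horb
      set l : List V :=
        List.ofFn (fun k : Fin n => (σ (HPark.listEquiv q n l₀ hl₀ k) : V)) with hldef
      have hlen : l.length = n := by simp [hldef]
      have hnd : l.Nodup := by
        rw [hldef, List.nodup_ofFn]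
        intro a b hab
        exact (HPark.listEquiv q n l₀ hl₀).injective (σ.injective (Subtype.ext hab))
      have hfin : l.toFinset = Finset.univ.erase q := by
        apply Finset.eq_of_subset_of_card_le
        · intro v hv
          rw [List.mem_toFinset, hldef, List.mem_ofFn] at hv
          obtain ⟨k, hk⟩ := hv
          rw [← hk]
          exact Finset.mem_erase.2 ⟨(σ (HPark.listEquiv q n l₀ hl₀ k)).2, Finset.mem_univ _⟩
        · rw [Finset.card_erase_of_mem (Finset.mem_univ q), Finset.card_univ, hV,
            List.toFinset_card_of_nodup hnd, hlen]
          omega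
      have hl : HPark.GoodList q n l := ⟨hnd, hfin, hlen⟩
      refine ⟨l, hl, ?_⟩
      funext v
      by_cases hvq : v = q
      · subst hvq
        rw [hq0]
        simp [HPark.cstarL]
      · have h1 : c v = f₀ (σ.symm ⟨v, hvq⟩) := (congrFun hσ ⟨v, hvq⟩).symm
        set u := σ.symm ⟨v, hvq⟩ with hu
        set k₀ := (HPark.listEquiv q n l₀ hl₀).symm u with hk₀
        have hget : l.get ⟨(k₀ : ℕ), by rw [hlen]; exact k₀.2⟩ = v := by
          simp only [hldef, List.get_eq_getElem, List.getElem_ofFn]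
          have : HPark.listEquiv q n l₀ hl₀ ⟨(k₀ : ℕ), k₀.2⟩ = u := by
            rw [show (⟨(k₀ : ℕ), k₀.2⟩ : Fin n) = k₀ from rfl, hk₀]
            exact (HPark.listEquiv q n l₀ hl₀).apply_symm_apply u
          rw [this, hu]
          simp
        have hk0 : l.idxOf v = (k₀ : ℕ) := by
          rw [← hget]
          simp [List.get_eq_getElem, List.Nodup.idxOf_getElem hnd]
        rw [h1, hf₀w, hcstar_ne l v hvq, hk0, ← HPark.listEquiv_symm_coe q n l₀ hl₀ u, hk₀]
  -- transfer the cardinality to the orbit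
  have hM : Nat.card {c : V → ℕ // IsMaximalHParking (completeEdges V d) q c}
      = Nat.card (MulAction.orbit (Equiv.Perm {v : V // v ≠ q}) f₀) := by
    refine Nat.card_congr ?_
    refine
      { toFun := fun c => ⟨fun v : {v : V // v ≠ q} => c.1 v.1, ((main c.1).1 c.2).2⟩
        invFun := fun g => ⟨fun v => if h : v = q then 0 else g.1 ⟨v, h⟩, ?_⟩
        left_inv := ?_
        right_inv := ?_ }
    · refine (main _).2 ⟨by simp, ?_⟩
      have hres : (fun v : {v : V // v ≠ q} =>
          (fun v' => if h : v' = q then 0 else g.1 ⟨v', h⟩) v.1) = g.1 :=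
        funext fun v => dif_neg v.2
      rw [hres]
      exact g.2
    · intro c
      apply Subtype.ext
      funext v
      by_cases h : v = q
      · subst h
        simp [c.2.1]
      · simp [h]
    · intro g
      apply Subtype.ext
      funext v
      exact dif_neg v.2
  -- cardinalities
  have hcα : Fintype.card {v : V // v ≠ q} = n := by
    have h1 := Fintype.card_subtype_compl (fun v : V => v = q)
    rw [Fintype.card_subtype_eq q, hV] at h1
    simpa using h1
  letI : Fintype (MulAction.orbit (Equiv.Perm {v : V // v ≠ q}) f₀) :=
    Set.Finite.fintype (Set.finite_range _)
  letI : Fintype (MulAction.stabilizer (Equiv.Perm {v : V // v ≠ q}) f₀) :=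
    Fintype.ofFinite _
  have hOS := MulAction.card_orbit_mul_card_stabilizer_eq_card_group
    (Equiv.Perm {v : V // v ≠ q}) f₀
  have hG : Fintype.card (Equiv.Perm {v : V // v ≠ q}) = n.factorial := by
    rw [Fintype.card_perm, hcα]
  -- the top fiber
  set S : Finset {v : V // v ≠ q} := Finset.univ.filter (fun v => f₀ v = N - 1) with hS
  have hmemS : ∀ v : {v : V // v ≠ q},
      v ∈ S ↔ (n - 1 - l₀.idxOf v.1).choose (d - 1) = 0 := by
    intro v
    rw [hS, Finset.mem_filter]
    simp only [Finset.mem_univ, true_and]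
    rw [hf₀w, hwmax _ (hidxlt v)]
  have hfib : ∀ u v : {v : V // v ≠ q}, f₀ u = f₀ v → u ≠ v → f₀ v = N - 1 := by
    intro u v hfe hne
    have hiu := hidxlt u
    have hiv := hidxlt v
    have hine : l₀.idxOf u.1 ≠ l₀.idxOf v.1 := by
      intro h
      apply hne
      apply Subtype.ext
      have hu : u.1 ∈ l₀ := List.idxOf_lt_length_iff.1 (by rw [hl₀.2.2]; exact hiu)
      have hv : v.1 ∈ l₀ := List.idxOf_lt_length_iff.1 (by rw [hl₀.2.2]; exact hiv)
      exact (List.idxOf_inj hu).1 h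
    rw [hf₀w, hf₀w] at hfe
    have := hwzero _ _ hiu hiv hine hfe
    rw [hf₀w, hwmax _ hiv]
    exact this.2
  -- stabilizer description
  have hfix : ∀ σ : Equiv.Perm {v : V // v ≠ q},
      σ • f₀ = f₀ ↔ ∀ v, f₀ (σ v) = f₀ v := by
    intro σ
    constructor
    · intro h v
      have h2 := congrFun h (σ v)
      show f₀ (σ v) = f₀ v
      calc f₀ (σ v) = (σ • f₀) (σ v) := by rw [h]
        _ = f₀ (σ.symm (σ v)) := rfl
        _ = f₀ v := by rw [Equiv.symm_apply_apply]
    · intro h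
      funext v
      show f₀ (σ.symm v) = f₀ v
      conv_rhs => rw [← Equiv.apply_symm_apply σ v]
      exact (h (σ.symm v)).symm
  have hstab : ∀ σ : Equiv.Perm {v : V // v ≠ q},
      σ ∈ MulAction.stabilizer (Equiv.Perm {v : V // v ≠ q}) f₀ ↔
        ∀ v, v ∉ S → σ v = v := by
    intro σ
    rw [MulAction.mem_stabilizer_iff, hfix]
    constructor
    · intro h v hvS
      by_contra hne
      have hmax := hfib (σ v) v (h v) (fun he => hne he)
      apply hvS
      rw [hS, Finset.mem_filter]
      exact ⟨Finset.mem_univ _, hmax⟩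
    · intro h v
      by_cases hvS : v ∈ S
      · by_cases hσS : σ v ∈ S
        · have h1 : f₀ (σ v) = N - 1 := (Finset.mem_filter.1 hσS).2
          have h2 : f₀ v = N - 1 := (Finset.mem_filter.1 hvS).2
          rw [h1, h2]
        · exfalso
          have := h (σ v) hσS
          have h3 : σ v = v := σ.injective this
          rw [h3] at hσS
          exact hσS hvS
      · rw [h v hvS]
  -- card of the top fiber
  have hCardS : S.card = d - 1 := by
    have hIco : ((Finset.range n).filter (fun k => n - 1 - k < d - 1))
        = Finset.Ico (n + 1 - d) n := by
      ext k
      simp only [Finset.mem_filter, Finset.mem_range, Finset.mem_Ico]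
      omega
    have hcard2 : ((Finset.range n).filter (fun k => n - 1 - k < d - 1)).card = d - 1 := by
      rw [hIco, Nat.card_Ico]
      omega
    rw [← hcard2]
    apply Finset.card_nbij (fun v => l₀.idxOf v.1)
    · intro v hv
      rw [Finset.mem_coe, Finset.mem_filter, Finset.mem_range]
      refine ⟨hidxlt v, ?_⟩
      have := (hmemS v).1 hv
      exact Nat.choose_eq_zero_iff.1 this
    · intro u hu v hv h
      apply Subtype.ext
      have hu' : u.1 ∈ l₀ := List.idxOf_lt_length_iff.1 (by rw [hl₀.2.2]; exact hidxlt u)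
      have hv' : v.1 ∈ l₀ := List.idxOf_lt_length_iff.1 (by rw [hl₀.2.2]; exact hidxlt v)
      exact (List.idxOf_inj hu').1 h
    · intro k hk
      rw [Finset.coe_filter, Set.mem_setOf_eq, Finset.mem_range] at hk
      obtain ⟨hkn, hkd⟩ := hk
      refine ⟨HPark.listEquiv q n l₀ hl₀ ⟨k, hkn⟩, ?_, ?_⟩
      · rw [Finset.mem_coe, hmemS, HPark.listEquiv_indexOf]
        have hlt : n - 1 - k < d - 1 := by omega
        exact Nat.choose_eq_zero_iff.2 hlt
      · exact HPark.listEquiv_indexOf q n l₀ hl₀ ⟨k, hkn⟩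
  -- stabilizer cardinality
  have hstabcard : Fintype.card
      (MulAction.stabilizer (Equiv.Perm {v : V // v ≠ q}) f₀) = (d - 1).factorial := by
    have e1 : (MulAction.stabilizer (Equiv.Perm {v : V // v ≠ q}) f₀) ≃
        {σ : Equiv.Perm {v : V // v ≠ q} // ∀ v, ¬ v ∈ S → σ v = v} :=
      Equiv.subtypeEquivRight (fun σ => hstab σ)
    have e2 := (Equiv.Perm.subtypeEquivSubtypePerm (fun v : {v : V // v ≠ q} => v ∈ S))
    rw [Fintype.card_congr (e1.trans e2.symm), Fintype.card_perm, Fintype.card_coe, hCardS]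
  -- final computation
  rw [hM, Nat.card_eq_fintype_card]
  rw [hstabcard, hG] at hOS
  symm
  exact Nat.div_eq_of_eq_mul_left (Nat.factorial_pos (d - 1)) hOS.symm
end

section
/- For a nondecreasing positive integer vector u = (u_1,...,u_n), the maximal u-parking functions are exactly the vectors obtained by permuting the entries of (u_1 − 1, u_2 − 1, ..., u_n − 1). -/
open scoped Classical

open Finset

lemma card_filter_comp_perm {n : ℕ} (σ : Equiv.Perm (Fin n)) (P : Fin n → Prop) :
    (univ.filter fun k => P (σ k)).card = (univ.filter P).card := by
  apply Finset.card_bij (fun k _ => σ k)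
  · intro k hk; simp only [mem_filter, mem_univ, true_and] at *; exact hk
  · intro a _ b _ h; exact σ.injective h
  · intro b hb
    exact ⟨σ.symm b, by simpa using (mem_filter.mp hb).2, by simp⟩

lemma parking_iff {n : ℕ} (u c : Fin n → ℕ) :
    IsUParking u c ↔ ∀ i : Fin n, (i : ℕ) + 1 ≤ (univ.filter (fun j => c j < u i)).card := by
  constructor
  · rintro ⟨σ, hmono, hlt⟩ i
    have hsub : (Finset.Iic i).image σ ⊆ univ.filter (fun j => c j < u i) := by
      intro j hj
      simp only [mem_image, Finset.mem_Iic] at hj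
      obtain ⟨k, hk, rfl⟩ := hj
      simp only [mem_filter, mem_univ, true_and]
      exact lt_of_le_of_lt (hmono hk) (hlt i)
    calc (i : ℕ) + 1 = (Finset.Iic i).card := (Fin.card_Iic i).symm
      _ = ((Finset.Iic i).image σ).card := (Finset.card_image_of_injective _ σ.injective).symm
      _ ≤ _ := Finset.card_le_card hsub
  · intro h
    refine ⟨Tuple.sort c, Tuple.monotone_sort c, fun i => ?_⟩
    by_contra hle
    push_neg at hle
    have hsub : (univ.filter fun k => c (Tuple.sort c k) < u i) ⊆ Finset.Iio i := by
      intro k hk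
      simp only [mem_filter, mem_univ, true_and] at hk
      rw [Finset.mem_Iio]
      by_contra hki
      push_neg at hki
      exact absurd (lt_of_le_of_lt (Tuple.monotone_sort c hki) hk) (not_lt.mpr hle)
    have h1 := Finset.card_le_card hsub
    rw [Fin.card_Iio] at h1
    have h2 : (univ.filter fun k => c (Tuple.sort c k) < u i).card = (univ.filter fun j => c j < u i).card := by
      have := card_filter_comp_perm (Tuple.sort c) (fun j => c j < u i)
      convert this using 2 <;> congr!
    have := h i
    omega

/-- For a nondecreasing positive vector `u`, the maximal `u`-parking functions
(those for which increasing any coordinate by 1 destroys the parking property)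
are exactly the permutations of `(u_1 − 1, ..., u_n − 1)`. -/
theorem maximal_uparking_iff_perm {n : ℕ} (u : Fin n → ℕ) (hu : Monotone u)
    (hpos : ∀ i, 1 ≤ u i) (c : Fin n → ℕ) :
    (IsUParking u c ∧ ∀ i, ¬ IsUParking u (Function.update c i (c i + 1))) ↔
      ∃ σ : Equiv.Perm (Fin n), c = fun i => u (σ i) - 1 := by
  constructor
  · rintro ⟨hpark, hmax⟩
    obtain ⟨σ, hmono, hlt⟩ := hpark
    have key : ∀ i, u i ≤ c (σ i) + 1 := by
      by_contra hk
      push_neg at hk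
      obtain ⟨i, hi⟩ := hk
      apply hmax (σ i)
      rw [parking_iff]
      intro i'
      by_cases hcase : u i' = c (σ i) + 1
      · have hii : (i' : ℕ) < (i : ℕ) := by
          by_contra hle
          push_neg at hle
          have := hu (show i ≤ i' from hle)
          omega
        have hsub : (Finset.Iio i).image σ ⊆
            univ.filter (fun k => Function.update c (σ i) (c (σ i) + 1) k < u i') := by
          intro k hk2
          simp only [mem_image, Finset.mem_Iio] at hk2
          obtain ⟨m, hm, rfl⟩ := hk2
          have hne : σ m ≠ σ i := fun h => absurd (σ.injective h) (ne_of_lt hm)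
          simp only [mem_filter, mem_univ, true_and, Function.update_of_ne hne]
          have hmm : c (σ m) ≤ c (σ i) := hmono (le_of_lt hm)
          omega
        have hcard := Finset.card_le_card hsub
        rw [Finset.card_image_of_injective _ σ.injective, Fin.card_Iio] at hcard
        omega
      · have hsub : univ.filter (fun k => c k < u i') ⊆
            univ.filter (fun k => Function.update c (σ i) (c (σ i) + 1) k < u i') := by
          intro k hk2
          simp only [mem_filter, mem_univ, true_and] at *
          by_cases hkj : k = σ i
          · subst hkj; simp only [Function.update_self]; omega
          · rwa [Function.update_of_ne hkj]
        have h0 := (parking_iff u c).mp ⟨σ, hmono, hlt⟩ i'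
        have hcard := Finset.card_le_card hsub
        omega
    refine ⟨σ⁻¹, funext fun k => ?_⟩
    have h1 := hlt (σ⁻¹ k)
    have h2 := key (σ⁻¹ k)
    simp only [show σ (σ⁻¹ k) = k from σ.apply_symm_apply k] at h1 h2
    omega
  · rintro ⟨σ, hc⟩
    have hcv : ∀ k, c k = u (σ k) - 1 := fun k => by rw [hc]
    constructor
    · rw [parking_iff]
      intro i
      have hsub : (Finset.Iic i).image σ.symm ⊆ univ.filter (fun k => c k < u i) := by
        intro k hk
        simp only [mem_image, Finset.mem_Iic] at hk
        obtain ⟨m, hm, rfl⟩ := hk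
        simp only [mem_filter, mem_univ, true_and, hcv, Equiv.apply_symm_apply]
        have := hu hm
        have := hpos m
        omega
      have hcard := Finset.card_le_card hsub
      rwa [Finset.card_image_of_injective _ σ.symm.injective, Fin.card_Iic] at hcard
    · intro j hcon
      rw [parking_iff] at hcon
      set S := univ.filter (fun i => u i ≤ u (σ j)) with hS
      have hne : S.Nonempty := ⟨σ j, by simp [hS]⟩
      set i₁ := S.max' hne with hi₁
      have hmem : ∀ k, u k ≤ u (σ j) → k ≤ i₁ := fun k hk =>
        Finset.le_max' S k (by simp [hS, hk])
      have h1 : u i₁ ≤ u (σ j) := by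
        have := S.max'_mem hne
        simp only [hS, mem_filter, mem_univ, true_and] at this
        exact this
      have h2 : u (σ j) ≤ u i₁ := hu (hmem (σ j) le_rfl)
      have hcon1 := hcon i₁
      have hsub : univ.filter (fun k => Function.update c j (c j + 1) k < u i₁) ⊆
          ((Finset.Iic i₁).image (fun m => σ.symm m)).erase j := by
        intro k hk
        simp only [mem_filter, mem_univ, true_and] at hk
        have hkj : k ≠ j := by
          intro h
          subst h
          rw [Function.update_self, hcv] at hk
          have := hpos (σ k)
          omega
        rw [Function.update_of_ne hkj, hcv] at hk
        have hσk : σ k ≤ i₁ := hmem (σ k) (by have := hpos (σ k); omega)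
        refine Finset.mem_erase.mpr ⟨hkj, Finset.mem_image.mpr ⟨σ k, Finset.mem_Iic.mpr hσk, by simp⟩⟩
      have hcard := Finset.card_le_card hsub
      have hjmem : j ∈ (Finset.Iic i₁).image (fun m => σ.symm m) :=
        Finset.mem_image.mpr ⟨σ j, Finset.mem_Iic.mpr (hmem (σ j) le_rfl), by simp⟩
      rw [Finset.card_erase_of_mem hjmem,
        Finset.card_image_of_injective _ σ.symm.injective, Fin.card_Iic] at hcard
      omega
end

section
/- Let B be a connected bipartite graph with parts L and R and sink q ∈ R. If c and c' are distinct G-parking functions of B that vanish on L, then the spanning trees T and T' produced by the breadth-first burning (BBB) algorithm applied to c and c' satisfy LR(T) ≠ LR(T'), where LR(T) is the set of edges of T oriented from R to L when all edges of T are oriented toward q. -/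
open scoped Classical

def IsGParking {W : Type*} [Fintype W] (Adj : W → W → Prop) (q : W) (b : W → ℕ) : Prop :=
  ∀ S : Finset W, S.Nonempty → (∀ j ∈ S, j ≠ q) → ∃ j ∈ S,
    b j < (Finset.univ.filter fun w => Adj j w ∧ w ∉ S).card

/-- A `q`-rooted spanning tree, encoded by its parent function `p`: every vertex other
than `q` is adjacent to its parent, and iterating the parent function reaches `q`
(unique directed path to the root). -/
def IsRootedSpanningTree {W : Type*} (Adj : W → W → Prop) (q : W) (p : W → W) : Prop :=
  p q = q ∧ (∀ w, w ≠ q → Adj w (p w)) ∧ ∀ w, ∃ k, p^[k] w = q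

/-- Height of a vertex in the rooted tree with parent function `p`:
the distance (number of tree edges) to the root `q`. -/
noncomputable def theight {W : Type*} (q : W) (p : W → W) (w : W) : ℕ :=
  sInf {k | p^[k] w = q}

/-- The breadth-first tree order: compare first by height, then by the fixed
total order `β` on vertices. -/
def treeLt {W : Type*} (q : W) (p : W → W) (β : W → ℕ) (a b : W) : Prop :=
  theight q p a < theight q p b ∨ (theight q p a = theight q p b ∧ β a < β b)

/-- The (breadth-first) Chebikin–Pylyavskyy forward map: the value at `j` is the number
of edges out of `j` preceding the tree edge of `j` in the breadth-first tree order.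
The BBB algorithm applied to a parking function `c` produces exactly the spanning tree
whose image under this map is `c`. -/
noncomputable def cpMap {W : Type*} [Fintype W] (Adj : W → W → Prop) (q : W)
    (p : W → W) (β : W → ℕ) (j : W) : ℕ :=
  (Finset.univ.filter fun i => Adj j i ∧ treeLt q p β i (p j)).card

lemma theight_zero_iff {W : Type*} (q : W) (p : W → W)
    (hroot : ∀ w, ∃ k, p^[k] w = q) (w : W) : theight q p w = 0 ↔ w = q := by
  constructor
  · intro h
    have hmem : p^[theight q p w] w = q := Nat.sInf_mem (hroot w)
    rwa [h, Function.iterate_zero_apply] at hmem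
  · intro h
    subst h
    exact Nat.sInf_eq_zero.mpr (Or.inl (by simp [Set.mem_setOf_eq]))

lemma theight_rec {W : Type*} (q : W) (p : W → W)
    (hroot : ∀ w, ∃ k, p^[k] w = q) (w : W) (hw : w ≠ q) :
    theight q p w = theight q p (p w) + 1 := by
  have hmem : p^[theight q p (p w)] (p w) = q := Nat.sInf_mem (hroot (p w))
  have hle : theight q p w ≤ theight q p (p w) + 1 := by
    apply Nat.sInf_le
    show p^[theight q p (p w) + 1] w = q
    rw [Function.iterate_succ_apply]
    exact hmem
  have hne0 : theight q p w ≠ 0 := fun h => hw ((theight_zero_iff q p hroot w).mp h)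
  obtain ⟨m, hm⟩ : ∃ m, theight q p w = m + 1 := ⟨theight q p w - 1, by omega⟩
  have hmemw : p^[theight q p w] w = q := Nat.sInf_mem (hroot w)
  rw [hm, Function.iterate_succ_apply] at hmemw
  have : theight q p (p w) ≤ m := Nat.sInf_le hmemw
  omega

lemma bbb_aux_step {W : Type*} (q : W) (side : W → Bool) (p p' : W → W) (h h' : W → ℕ)
    (h0 : ∀ w, h w = 0 ↔ w = q) (h0' : ∀ w, h' w = 0 ↔ w = q)
    (hrec : ∀ w, w ≠ q → h w = h (p w) + 1)
    (hrec' : ∀ w, w ≠ q → h' w = h' (p' w) + 1)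
    (hagree : ∀ w, side w = true → p w = p' w)
    (hmin' : ∀ w, side w = false → h' (p' w) ≤ h' (p w))
    (n : ℕ) (IH : ∀ m, m < n → ∀ w, h w = m ↔ h' w = m)
    (w : W) (hw : h w = n) : h' w = n := by
  by_cases hwq : w = q
  · have : n = 0 := by rw [← hw]; exact (h0 w).mpr hwq
    rw [this]
    exact (h0' w).mpr hwq
  · have hr := hrec w hwq
    have hmn : h (p w) < n := by omega
    have hm' : h' (p w) = h (p w) := (IH _ hmn (p w)).mp rfl
    cases hside : side w with
    | false =>
      have hle : h' w ≤ n := by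
        have := hmin' w hside
        have := hrec' w hwq
        omega
      by_contra hne
      have hlt : h' w < n := lt_of_le_of_ne hle hne
      have := (IH _ hlt w).mpr rfl
      omega
    | true =>
      have := hrec' w hwq
      rw [← hagree w hside] at this
      omega

lemma bbb_aux {W : Type*} (q : W) (side : W → Bool) (p p' : W → W) (h h' : W → ℕ)
    (h0 : ∀ w, h w = 0 ↔ w = q) (h0' : ∀ w, h' w = 0 ↔ w = q)
    (hrec : ∀ w, w ≠ q → h w = h (p w) + 1)
    (hrec' : ∀ w, w ≠ q → h' w = h' (p' w) + 1)
    (hagree : ∀ w, side w = true → p w = p' w)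
    (hmin : ∀ w, side w = false → h (p w) ≤ h (p' w))
    (hmin' : ∀ w, side w = false → h' (p' w) ≤ h' (p w)) :
    ∀ w, h w = h' w := by
  have key : ∀ n : ℕ, ∀ w, h w = n ↔ h' w = n := by
    intro n
    induction n using Nat.strong_induction_on with
    | _ n IH =>
      intro w
      constructor
      · exact bbb_aux_step q side p p' h h' h0 h0' hrec hrec' hagree hmin' n IH w
      · exact bbb_aux_step q side p' p h' h h0' h0 hrec' hrec
          (fun w hw => (hagree w hw).symm) hmin n
          (fun m hm w => (IH m hm w).symm) w
  intro w
  exact ((key (h w) w).mp rfl).symm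

/-- Let `B` be a connected bipartite graph with parts `L` (`side = false`) and
`R` (`side = true`) and sink `q ∈ R`. If `c ≠ c'` are `G`-parking functions of `B`
vanishing on `L`, then the spanning trees produced by the BBB algorithm from `c` and `c'`
(i.e. the trees mapping to `c` resp. `c'` under the breadth-first CP map) are not
burning equivalent: some right-to-left tree edge differs. -/
theorem bbb_trees_not_burning_equivalent {W : Type*} [Fintype W] [DecidableEq W]
    (Adj : W → W → Prop) (hsymm : ∀ a b, Adj a b → Adj b a)
    (hconn : ∀ a b, Relation.ReflTransGen Adj a b)
    (side : W → Bool) (hbip : ∀ a b, Adj a b → side a ≠ side b)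
    (q : W) (hq : side q = true) (β : W → ℕ) (hβ : Function.Injective β)
    (c c' : W → ℕ)
    (hc : IsGParking Adj q c) (hc' : IsGParking Adj q c')
    (hcL : ∀ w, side w = false → c w = 0) (hc'L : ∀ w, side w = false → c' w = 0)
    (hne : ∃ w, w ≠ q ∧ c w ≠ c' w)
    (p p' : W → W)
    (hp : IsRootedSpanningTree Adj q p) (hp' : IsRootedSpanningTree Adj q p')
    (hmap : ∀ w, w ≠ q → cpMap Adj q p β w = c w)
    (hmap' : ∀ w, w ≠ q → cpMap Adj q p' β w = c' w) :
    ∃ w, w ≠ q ∧ side w = true ∧ p w ≠ p' w := by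
  by_contra hcon
  push_neg at hcon
  have hpq : ∀ w, side w = true → p w = p' w := by
    intro w hw
    by_cases hwq : w = q
    · subst hwq; rw [hp.1, hp'.1]
    · exact hcon w hwq hw
  -- left vertices are not q
  have hLq : ∀ w, side w = false → w ≠ q := by
    intro w hw e; rw [e, hq] at hw; exact Bool.noConfusion hw
  -- cpMap vanishes on left vertices
  have hcp0 : ∀ w, side w = false → cpMap Adj q p β w = 0 := by
    intro w hw; rw [hmap w (hLq w hw), hcL w hw]
  have hcp0' : ∀ w, side w = false → cpMap Adj q p' β w = 0 := by
    intro w hw; rw [hmap' w (hLq w hw), hc'L w hw]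
  -- minimality of parents of left vertices
  have hmin : ∀ w, side w = false → theight q p (p w) ≤ theight q p (p' w) := by
    intro w hw
    have hwq := hLq w hw
    have h0 := hcp0 w hw
    unfold cpMap at h0
    rw [Finset.card_eq_zero, Finset.filter_eq_empty_iff] at h0
    have hni := h0 (Finset.mem_univ (p' w))
    by_contra hlt
    exact hni ⟨hp'.2.1 w hwq, Or.inl (not_le.mp hlt)⟩
  have hmin' : ∀ w, side w = false → theight q p' (p' w) ≤ theight q p' (p w) := by
    intro w hw
    have hwq := hLq w hw
    have h0 := hcp0' w hw
    unfold cpMap at h0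
    rw [Finset.card_eq_zero, Finset.filter_eq_empty_iff] at h0
    have hni := h0 (Finset.mem_univ (p w))
    by_contra hlt
    exact hni ⟨hp.2.1 w hwq, Or.inl (not_le.mp hlt)⟩
  -- heights agree
  have heq : ∀ w, theight q p w = theight q p' w :=
    bbb_aux q side p p' (theight q p) (theight q p')
      (theight_zero_iff q p hp.2.2) (theight_zero_iff q p' hp'.2.2)
      (theight_rec q p hp.2.2) (theight_rec q p' hp'.2.2)
      hpq hmin hmin'
  -- conclude at the witness
  obtain ⟨w₀, hw₀q, hw₀c⟩ := hne
  have hside0 : side w₀ = true := by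
    cases h : side w₀ with
    | false => exact absurd (by rw [hcL w₀ h, hc'L w₀ h]) hw₀c
    | true => rfl
  apply hw₀c
  rw [← hmap w₀ hw₀q, ← hmap' w₀ hw₀q]
  unfold cpMap
  congr 1
  apply Finset.filter_congr
  intro i _
  rw [hpq w₀ hside0]
  unfold treeLt
  rw [heq i, heq (p' w₀)]
end

section
/- If T and T' are burning equivalent spanning trees of the bipartite incidence graph B(H) of a hypergraph H, then for every hyperedge e ∈ E(H), the degree of the vertex e in T equals the degree of e in T'. Consequently burning equivalent spanning trees give rise to the same hypertree f : E(H) → N, f(e) = max(deg_T(e) − 1, 0). -/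
open scoped Classical

def bAdj {V : Type*} (E : Finset (Finset V)) :
    ({e : Finset V // e ∈ E} ⊕ V) → ({e : Finset V // e ∈ E} ⊕ V) → Prop
  | Sum.inl e, Sum.inr v => v ∈ e.1
  | Sum.inr v, Sum.inl e => v ∈ e.1
  | _, _ => False

/-- Degree of a vertex `x` in the spanning tree with parent function `p`:
the number of children of `x` plus one for the edge to its own parent (if `x` is
not the root). -/
noncomputable def treeDeg {V : Type*} [Fintype V] [DecidableEq V] (E : Finset (Finset V))
    (q : V) (p : ({e : Finset V // e ∈ E} ⊕ V) → ({e : Finset V // e ∈ E} ⊕ V))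
    (x : {e : Finset V // e ∈ E} ⊕ V) : ℕ :=
  (Finset.univ.filter fun w => w ≠ Sum.inr q ∧ p w = x).card +
    (if x ≠ Sum.inr q then 1 else 0)

/-- Burning equivalent spanning trees of `B(H)` have the same degree at every hyperedge
vertex; consequently they give rise to the same hypertree `f(e) = max(deg(e) − 1, 0)`. -/
theorem burning_equivalent_same_hypertree {V : Type*} [Fintype V] [DecidableEq V]
    (E : Finset (Finset V)) (q : V)
    (p p' : ({e : Finset V // e ∈ E} ⊕ V) → ({e : Finset V // e ∈ E} ⊕ V))
    (hp : IsRootedSpanningTree (bAdj E) (Sum.inr q) p)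
    (hp' : IsRootedSpanningTree (bAdj E) (Sum.inr q) p')
    (hequiv : ∀ v : V, v ≠ q → p (Sum.inr v) = p' (Sum.inr v)) :
    (∀ e : {e : Finset V // e ∈ E}, treeDeg E q p (Sum.inl e) = treeDeg E q p' (Sum.inl e)) ∧
    ((fun e : {e : Finset V // e ∈ E} => treeDeg E q p (Sum.inl e) - 1) =
      fun e => treeDeg E q p' (Sum.inl e) - 1) := by
  have key : ∀ e : {e : Finset V // e ∈ E},
      treeDeg E q p (Sum.inl e) = treeDeg E q p' (Sum.inl e) := by
    intro e
    unfold treeDeg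
    have hf : (Finset.univ.filter fun w => w ≠ Sum.inr q ∧ p w = Sum.inl e) =
        (Finset.univ.filter fun w => w ≠ Sum.inr q ∧ p' w = Sum.inl e) := by
      ext w
      simp only [Finset.mem_filter, Finset.mem_univ, true_and]
      rcases w with e' | v
      · constructor
        · rintro ⟨hne, hpw⟩
          exact absurd (hpw ▸ hp.2.1 _ hne) (by simp [bAdj])
        · rintro ⟨hne, hpw⟩
          exact absurd (hpw ▸ hp'.2.1 _ hne) (by simp [bAdj])
      · constructor
        · rintro ⟨hne, hpw⟩
          have hv : v ≠ q := fun h => hne (by rw [h])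
          exact ⟨hne, (hequiv v hv) ▸ hpw⟩
        · rintro ⟨hne, hpw⟩
          have hv : v ≠ q := fun h => hne (by rw [h])
          exact ⟨hne, (hequiv v hv).symm ▸ hpw⟩
    rw [hf]
  exact ⟨key, funext fun e => by rw [key e]⟩
end

section
/- Let H be a star hypergraph (every hyperedge contains the sink q). Then the q-rooted spanning trees of H (burning equivalence classes of spanning trees of B(H)) are in bijection with the q-rooted spanning trees of the digraph ←H obtained from B(H) by directing (e,q) for each hyperedge e and (v,e) for each v ∈ e with v ≠ q. -/
open scoped Classical

/-- Directed adjacency of the digraph `←H` associated to a star hypergraph: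
a directed edge `(e, q)` for each hyperedge `e`, and a directed edge `(v, e)`
for each `v ∈ e` with `v ≠ q`. -/
def starAdj {V : Type*} (E : Finset (Finset V)) (q : V) :
    ({e : Finset V // e ∈ E} ⊕ V) → ({e : Finset V // e ∈ E} ⊕ V) → Prop
  | Sum.inl _, Sum.inr v => v = q
  | Sum.inr v, Sum.inl e => v ∈ e.1 ∧ v ≠ q
  | _, _ => False

/-- Burning equivalence on spanning trees of `B(H)`. -/
def burnSetoid {V : Type*} [Fintype V] [DecidableEq V] (E : Finset (Finset V)) (q : V) :
    Setoid {p : ({e : Finset V // e ∈ E} ⊕ V) → ({e : Finset V // e ∈ E} ⊕ V) //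
      IsRootedSpanningTree (bAdj E) (Sum.inr q) p} where
  r p p' := ∀ v : V, v ≠ q → p.1 (Sum.inr v) = p'.1 (Sum.inr v)
  iseqv := ⟨fun _ _ _ => rfl, fun h v hv => (h v hv).symm,
    fun h1 h2 v hv => (h1 v hv).trans (h2 v hv)⟩

/-- Normalization: keep the parent of each non-sink vertex, send every hyperedge
vertex (and the sink) to the sink. -/
def bNorm {V : Type*} [DecidableEq V] (E : Finset (Finset V)) (q : V)
    (p : ({e : Finset V // e ∈ E} ⊕ V) → ({e : Finset V // e ∈ E} ⊕ V)) :
    ({e : Finset V // e ∈ E} ⊕ V) → ({e : Finset V // e ∈ E} ⊕ V)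
  | Sum.inl _ => Sum.inr q
  | Sum.inr v => if v = q then Sum.inr q else p (Sum.inr v)

lemma bNorm_parent_edge {V : Type*} [DecidableEq V] {E : Finset (Finset V)} {q : V}
    {Adj : ({e : Finset V // e ∈ E} ⊕ V) → ({e : Finset V // e ∈ E} ⊕ V) → Prop}
    {p : ({e : Finset V // e ∈ E} ⊕ V) → ({e : Finset V // e ∈ E} ⊕ V)}
    (hedge : ∀ v e, v ≠ q → Adj (Sum.inr v) e → ∃ e', e = Sum.inl e' ∧ v ∈ e'.1)
    (hp : IsRootedSpanningTree Adj (Sum.inr q) p) (v : V) (hv : v ≠ q) :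
    ∃ e', p (Sum.inr v) = Sum.inl e' ∧ v ∈ e'.1 := by
  have := hp.2.1 (Sum.inr v) (by simp [hv])
  exact hedge v _ hv this

lemma bNorm_iter {V : Type*} [DecidableEq V] {E : Finset (Finset V)} {q : V}
    {p : ({e : Finset V // e ∈ E} ⊕ V) → ({e : Finset V // e ∈ E} ⊕ V)}
    (hform : ∀ v, v ≠ q → ∃ e', p (Sum.inr v) = Sum.inl e')
    (w : ({e : Finset V // e ∈ E} ⊕ V)) :
    (bNorm E q p)^[2] w = Sum.inr q := by
  have h1 : ∀ u, bNorm E q p (bNorm E q p u) = Sum.inr q ∨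
      bNorm E q p u = Sum.inr q → True := fun _ _ => trivial
  show bNorm E q p (bNorm E q p w) = Sum.inr q
  cases w with
  | inl e => simp [bNorm]
  | inr v =>
    by_cases hv : v = q
    · simp [bNorm, hv]
    · obtain ⟨e', he'⟩ := hform v hv
      simp [bNorm, hv, he']

lemma star_of_b {V : Type*} [DecidableEq V] {E : Finset (Finset V)} {q : V}
    {p : ({e : Finset V // e ∈ E} ⊕ V) → ({e : Finset V // e ∈ E} ⊕ V)}
    (hp : IsRootedSpanningTree (bAdj E) (Sum.inr q) p) :
    IsRootedSpanningTree (starAdj E q) (Sum.inr q) (bNorm E q p) := by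
  have hform : ∀ v, v ≠ q → ∃ e', p (Sum.inr v) = Sum.inl e' ∧ v ∈ e'.1 := by
    intro v hv
    refine bNorm_parent_edge ?_ hp v hv
    intro v' e hv' hAdj
    cases e with
    | inl e' => exact ⟨e', rfl, hAdj⟩
    | inr w => exact absurd hAdj (by simp [bAdj])
  refine ⟨by simp [bNorm], ?_, fun w => ⟨2, bNorm_iter (fun v hv => (hform v hv).imp
    fun e' h => h.1) w⟩⟩
  intro w hw
  cases w with
  | inl e => simp [bNorm, starAdj]
  | inr v =>
    have hv : v ≠ q := fun h => hw (by simp [h])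
    obtain ⟨e', he', hve⟩ := hform v hv
    simp only [bNorm, if_neg hv, he']
    exact ⟨hve, hv⟩

lemma b_of_star {V : Type*} [DecidableEq V] {E : Finset (Finset V)} {q : V}
    (hstar : ∀ e ∈ E, q ∈ e)
    {p : ({e : Finset V // e ∈ E} ⊕ V) → ({e : Finset V // e ∈ E} ⊕ V)}
    (hp : IsRootedSpanningTree (starAdj E q) (Sum.inr q) p) :
    IsRootedSpanningTree (bAdj E) (Sum.inr q) (bNorm E q p) := by
  have hform : ∀ v, v ≠ q → ∃ e', p (Sum.inr v) = Sum.inl e' ∧ v ∈ e'.1 := by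
    intro v hv
    refine bNorm_parent_edge ?_ hp v hv
    intro v' e hv' hAdj
    cases e with
    | inl e' => exact ⟨e', rfl, hAdj.1⟩
    | inr w => exact absurd hAdj (by simp [starAdj])
  refine ⟨by simp [bNorm], ?_, fun w => ⟨2, bNorm_iter (fun v hv => (hform v hv).imp
    fun e' h => h.1) w⟩⟩
  intro w hw
  cases w with
  | inl e =>
    show bAdj E (Sum.inl e) (Sum.inr q)
    exact hstar e.1 e.2
  | inr v =>
    have hv : v ≠ q := fun h => hw (by simp [h])
    obtain ⟨e', he', hve⟩ := hform v hv
    simp only [bNorm, if_neg hv, he']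
    exact hve

lemma bNorm_eq_self_of_star {V : Type*} [DecidableEq V] {E : Finset (Finset V)} {q : V}
    {p : ({e : Finset V // e ∈ E} ⊕ V) → ({e : Finset V // e ∈ E} ⊕ V)}
    (hp : IsRootedSpanningTree (starAdj E q) (Sum.inr q) p) :
    bNorm E q p = p := by
  funext w
  cases w with
  | inl e =>
    have h := hp.2.1 (Sum.inl e) (by simp)
    cases he : p (Sum.inl e) with
    | inl e' => rw [he] at h; exact absurd h (by simp [starAdj])
    | inr v =>
      rw [he] at h
      have : v = q := h
      simp [bNorm, he, this]
  | inr v =>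
    by_cases hv : v = q
    · subst hv
      simp only [bNorm, if_pos rfl]
      exact hp.1.symm
    · simp [bNorm, hv]

/-- For a star hypergraph `H` (every hyperedge contains the sink `q`), the `q`-rooted
spanning trees of `H` (burning equivalence classes of spanning trees of `B(H)`) are in
bijection with the `q`-rooted spanning trees of the digraph `←H`. -/
theorem star_spanningTrees_equiv_digraph {V : Type*} [Fintype V] [DecidableEq V]
    (E : Finset (Finset V)) (q : V) (hconn : HConnected E) (hstar : ∀ e ∈ E, q ∈ e) :
    Nonempty (Quotient (burnSetoid E q) ≃
      {p : ({e : Finset V // e ∈ E} ⊕ V) → ({e : Finset V // e ∈ E} ⊕ V) //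
        IsRootedSpanningTree (starAdj E q) (Sum.inr q) p}) := by
  refine ⟨Equiv.ofBijective
    (Quotient.lift (fun p => (⟨bNorm E q p.1, star_of_b p.2⟩ :
      {p : ({e : Finset V // e ∈ E} ⊕ V) → ({e : Finset V // e ∈ E} ⊕ V) //
        IsRootedSpanningTree (starAdj E q) (Sum.inr q) p})) ?_) ⟨?_, ?_⟩⟩
  · intro a b hab
    refine Subtype.ext (funext fun w => ?_)
    cases w with
    | inl e => rfl
    | inr v =>
      by_cases hv : v = q
      · simp [bNorm, hv]
      · simp [bNorm, hv, hab v hv]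
  · intro a b
    induction a using Quotient.ind
    induction b using Quotient.ind
    rename_i pa pb
    intro h
    have h' : bNorm E q pa.1 = bNorm E q pb.1 := congrArg Subtype.val h
    refine Quotient.sound (fun v hv => ?_)
    have := congrFun h' (Sum.inr v)
    simpa [bNorm, hv] using this
  · intro p'
    refine ⟨Quotient.mk _ ⟨bNorm E q p'.1, b_of_star hstar p'.2⟩, ?_⟩
    refine Subtype.ext ?_
    show bNorm E q (bNorm E q p'.1) = p'.1
    rw [bNorm_eq_self_of_star p'.2, bNorm_eq_self_of_star p'.2]
end

section
/- Let H be a hypergraph with sink q, c a chip configuration on the nonsink vertices, and T a nonempty set of nonsink vertices. Then T is ready to fire (every cancellative firing choice for T yields a nonnegative configuration) if and only if deg_T(i) ≤ c_i for all i ∈ T. Consequently, c is superstable if and only if c is an H-parking function. -/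
open scoped Classical

/-- `C` is a valid firing choice for the set `T`: each `v ∈ T` sends, along every
hyperedge `e` containing `v`, a chip to a chosen vertex `C v e ∈ e` different from `v`. -/
def ValidChoice {V : Type*} (E : Finset (Finset V)) (T : Finset V)
    (C : V → Finset V → V) : Prop :=
  ∀ v ∈ T, ∀ e ∈ E, v ∈ e → C v e ∈ e ∧ C v e ≠ v

/-- A firing choice for `T` is cancellative if on every hyperedge `e ⊆ T` the choices
form a permutation of `e` (fixed-point-free since `C v e ≠ v`). -/
def Cancellative {V : Type*} (E : Finset (Finset V)) (T : Finset V)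
    (C : V → Finset V → V) : Prop :=
  ∀ e ∈ E, e ⊆ T → Set.BijOn (fun v => C v e) (e : Set V) (e : Set V)

/-- The number of chips at `i` after firing the set `T` with firing choice `C`:
each `v ∈ T` loses one chip per incident hyperedge, and the chips are passed
according to `C`. -/
def fireResult {V : Type*} [Fintype V] [DecidableEq V] (E : Finset (Finset V))
    (T : Finset V) (C : V → Finset V → V) (c : V → ℕ) (i : V) : ℤ :=
  (c i : ℤ) - (if i ∈ T then ((E.filter fun e => i ∈ e).card : ℤ) else 0)
    + ∑ v ∈ T, ((E.filter fun e => v ∈ e ∧ C v e = i).card : ℤ)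

/-- `T` is ready to fire: every valid cancellative firing choice results in a
nonnegative configuration. -/
def ReadyToFire {V : Type*} [Fintype V] [DecidableEq V] (E : Finset (Finset V))
    (T : Finset V) (c : V → ℕ) : Prop :=
  ∀ C : V → Finset V → V, ValidChoice E T C → Cancellative E T C →
    ∀ i, 0 ≤ fireResult E T C c i

section Aux

variable {V : Type*} [Fintype V] [DecidableEq V]

lemma recv_swap (E : Finset (Finset V)) (T : Finset V) (C : V → Finset V → V) (i : V) :
    ∑ v ∈ T, (E.filter fun e => v ∈ e ∧ C v e = i).card
      = ∑ e ∈ E, (T.filter fun v => v ∈ e ∧ C v e = i).card := by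
  simp only [Finset.card_filter]
  rw [Finset.sum_comm]

lemma deg_split (E : Finset (Finset V)) (T : Finset V) (i : V) :
    (E.filter fun e => i ∈ e).card
      = (E.filter fun e => i ∈ e ∧ e ⊆ T).card + degT E T i := by
  unfold degT
  rw [← Finset.filter_filter, ← Finset.filter_filter,
    Finset.card_filter_add_card_filter_not]

/-- The canonical firing choice: on hyperedges inside `T` use the cyclic permutation
coming from `formPerm` on `e.toList`; on other hyperedges send the chip to a vertex
outside `T`. -/
noncomputable def myChoice {V : Type*} [DecidableEq V] (T : Finset V) :
    V → Finset V → V :=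
  fun v e => if e ⊆ T then e.toList.formPerm v
    else if h : (e \ T).Nonempty then h.choose else v

lemma myChoice_valid (E : Finset (Finset V)) (T : Finset V)
    (hE : ∀ e ∈ E, 2 ≤ e.card) : ValidChoice E T (myChoice T) := by
  intro v hv e he hve
  by_cases h : e ⊆ T
  · simp only [myChoice, if_pos h]
    constructor
    · have := List.formPerm_apply_mem_of_mem (Finset.mem_toList.2 hve)
      rwa [Finset.mem_toList] at this
    · refine (List.formPerm_apply_mem_ne_self_iff _ e.nodup_toList v
        (Finset.mem_toList.2 hve)).2 ?_
      rw [Finset.length_toList]; exact hE e he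
  · have hne : (e \ T).Nonempty := by rwa [Finset.sdiff_nonempty]
    simp only [myChoice, if_neg h, dif_pos hne]
    have hw := hne.choose_spec
    rw [Finset.mem_sdiff] at hw
    exact ⟨hw.1, fun hEq => hw.2 (hEq ▸ hv)⟩

lemma myChoice_cancellative (E : Finset (Finset V)) (T : Finset V) :
    Cancellative E T (myChoice T) := by
  intro e he heT
  have hmap : Set.MapsTo (fun v => myChoice T v e) (e : Set V) (e : Set V) := by
    intro v hv
    simp only [myChoice, if_pos heT]
    have := List.formPerm_apply_mem_of_mem
      (Finset.mem_toList.2 (by exact_mod_cast hv : v ∈ e))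
    rw [Finset.mem_toList] at this
    exact_mod_cast this
  have hinj : Set.InjOn (fun v => myChoice T v e) (e : Set V) := by
    intro a _ b _ hab
    simp only [myChoice, if_pos heT] at hab
    exact e.toList.formPerm.injective hab
  exact ((e.finite_toSet).injOn_iff_bijOn_of_mapsTo hmap).1 hinj

lemma myChoice_card (T : Finset V) (e : Finset V) (i : V) (hiT : i ∈ T) :
    (T.filter fun v => v ∈ e ∧ myChoice T v e = i).card
      = if i ∈ e ∧ e ⊆ T then 1 else 0 := by
  by_cases hc : i ∈ e ∧ e ⊆ T
  · obtain ⟨hie, heT⟩ := hc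
    rw [if_pos ⟨hie, heT⟩, Finset.card_eq_one]
    refine ⟨e.toList.formPerm.symm i, ?_⟩
    ext v
    simp only [Finset.mem_filter, Finset.mem_singleton]
    constructor
    · rintro ⟨-, -, hvi⟩
      simp only [myChoice, if_pos heT] at hvi
      exact (Equiv.eq_symm_apply _).2 hvi
    · rintro rfl
      have hmem : e.toList.formPerm.symm i ∈ e := by
        by_contra hnot
        have h1 : e.toList.formPerm (e.toList.formPerm.symm i)
            = e.toList.formPerm.symm i :=
          List.formPerm_apply_of_notMem (by rwa [Finset.mem_toList])
        rw [Equiv.apply_symm_apply] at h1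
        exact hnot (h1 ▸ hie)
      refine ⟨heT hmem, hmem, ?_⟩
      simp only [myChoice, if_pos heT]
      exact Equiv.apply_symm_apply _ _
  · rw [if_neg hc, Finset.card_eq_zero, Finset.filter_eq_empty_iff]
    rintro v hvT ⟨hve, hvi⟩
    by_cases heT : e ⊆ T
    · have : e.toList.formPerm v ∈ e := by
        have := List.formPerm_apply_mem_of_mem (Finset.mem_toList.2 hve)
        rwa [Finset.mem_toList] at this
      simp only [myChoice, if_pos heT] at hvi
      exact hc ⟨hvi ▸ this, heT⟩
    · have hne : (e \ T).Nonempty := by rwa [Finset.sdiff_nonempty]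
      simp only [myChoice, if_neg heT, dif_pos hne] at hvi
      have hw := hne.choose_spec
      rw [Finset.mem_sdiff] at hw
      exact hw.2 (hvi ▸ hiT)

end Aux

/-- A nonempty set `T` of nonsink vertices is ready to fire iff `deg_T(i) ≤ c_i` for all
`i ∈ T`; consequently, `c` is superstable (no nonempty set of nonsink vertices is ready
to fire) iff `c` is an `H`-parking function. -/
theorem readyToFire_iff_degT_and_superstable_iff_hparking {V : Type*} [Fintype V]
    [DecidableEq V] (E : Finset (Finset V)) (q : V) (hE : ∀ e ∈ E, 2 ≤ e.card)
    (c : V → ℕ) :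
    (∀ T : Finset V, T.Nonempty → (∀ i ∈ T, i ≠ q) →
      (ReadyToFire E T c ↔ ∀ i ∈ T, degT E T i ≤ c i)) ∧
    ((¬ ∃ T : Finset V, T.Nonempty ∧ (∀ i ∈ T, i ≠ q) ∧ ReadyToFire E T c) ↔
      IsHParking E q c) := by
  have part1 : ∀ T : Finset V, T.Nonempty → (∀ i ∈ T, i ≠ q) →
      (ReadyToFire E T c ↔ ∀ i ∈ T, degT E T i ≤ c i) := by
    intro T hT hq
    constructor
    · intro hready i hiT
      have h := hready (myChoice T) (myChoice_valid E T hE) (myChoice_cancellative E T) i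
      simp only [fireResult, if_pos hiT] at h
      have recv_eq : ∑ v ∈ T, (E.filter fun e => v ∈ e ∧ myChoice T v e = i).card
          = (E.filter fun e => i ∈ e ∧ e ⊆ T).card := by
        rw [recv_swap, Finset.card_filter]
        exact Finset.sum_congr rfl fun e _ => myChoice_card T e i hiT
      rw [← Nat.cast_sum, recv_eq, deg_split E T i] at h
      push_cast at h
      omega
    · intro hdeg C hvalid hcanc i
      unfold fireResult
      by_cases hiT : i ∈ T
      · have key : (E.filter fun e => i ∈ e ∧ e ⊆ T).card
            ≤ ∑ v ∈ T, (E.filter fun e => v ∈ e ∧ C v e = i).card := by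
          rw [recv_swap, Finset.card_filter]
          refine Finset.sum_le_sum fun e he => ?_
          by_cases hc : i ∈ e ∧ e ⊆ T
          · obtain ⟨hie, heT⟩ := hc
            obtain ⟨v, hv, hvi⟩ := (hcanc e he heT).surjOn (by exact_mod_cast hie)
            rw [if_pos ⟨hie, heT⟩]
            refine Nat.one_le_iff_ne_zero.2 (Finset.card_ne_zero_of_mem
              (Finset.mem_filter.2 ⟨heT (by exact_mod_cast hv), by exact_mod_cast hv, hvi⟩))
          · simp [hc]
        have hd := hdeg i hiT
        rw [if_pos hiT, ← Nat.cast_sum]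
        have := deg_split E T i
        omega
      · rw [if_neg hiT]
        have : (0:ℤ) ≤ ∑ v ∈ T, ((E.filter fun e => v ∈ e ∧ C v e = i).card : ℤ) :=
          Finset.sum_nonneg fun v _ => by positivity
        omega
  refine ⟨part1, ?_⟩
  constructor
  · intro hns T hT hq
    by_contra hcon
    push_neg at hcon
    exact hns ⟨T, hT, hq, (part1 T hT hq).2 hcon⟩
  · rintro hp ⟨T, hT, hq, hrf⟩
    obtain ⟨i, hi, hlt⟩ := hp T hT hq
    exact absurd ((part1 T hT hq).1 hrf i hi) (by omega)
end

section
/- Let H be a hypergraph with sink q, c a chip configuration, and A a nonempty set of nonsink vertices. If A is ready to fire in H, then for every cycling C of H, the set A is ready to fire in the digraph D_C(H) starting from c (i.e., subtracting the columns of the reduced Laplacian of D_C(H) corresponding to A from c yields a nonnegative vector). -/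
open scoped Classical

/-- `σ` is a cycling of the hypergraph with edge set `E`. -/
def IsCycling {V : Type*} (E : Finset (Finset V)) (σ : Finset V → V → V) : Prop :=
  ∀ e ∈ E, (∀ v ∈ e, σ e v ∈ e) ∧ (∀ v ∈ e, ∀ w ∈ e, ∃ k, (σ e)^[k] v = w)

/-- If a nonempty set `A` of nonsink vertices is ready to fire in the hypergraph `H`,
then for every cycling `C` of `H` the set `A` is ready to fire in the digraph `D_C(H)`:
simultaneously firing `A` in `D_C(H)` (each `v ∈ A` loses one chip per incident hyperedge
and each directed edge `(u, σ_e u)` with `u ∈ A` passes one chip) leaves all nonsink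
coordinates nonnegative. -/
theorem readyToFire_hypergraph_implies_digraph {V : Type*} [Fintype V] [DecidableEq V]
    (E : Finset (Finset V)) (q : V) (hE : ∀ e ∈ E, 2 ≤ e.card) (c : V → ℕ)
    (A : Finset V) (hA : A.Nonempty) (hAq : ∀ i ∈ A, i ≠ q)
    (hready : ReadyToFire E A c) (σ : Finset V → V → V) (hσ : IsCycling E σ) :
    ∀ i : V, i ≠ q →
      0 ≤ (c i : ℤ) - (if i ∈ A then ((E.filter fun e => i ∈ e).card : ℤ) else 0)
        + ∑ u ∈ A, ((E.filter fun e => u ∈ e ∧ σ e u = i).card : ℤ) := by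
  intro i _
  -- the firing choice induced by the cycling
  set C : V → Finset V → V := fun v e => σ e v with hC
  -- iterates stay in e
  have hiter : ∀ e ∈ E, ∀ v ∈ e, ∀ k, (σ e)^[k] v ∈ e := by
    intro e he v hv k
    induction k with
    | zero => simpa using hv
    | succ n ih =>
        rw [Function.iterate_succ_apply']
        exact (hσ e he).1 _ ih
  -- the choice is fixed-point free
  have hne : ∀ e ∈ E, ∀ v ∈ e, σ e v ≠ v := by
    intro e he v hv hfix
    obtain ⟨w, hw, hwv⟩ := Finset.exists_mem_ne (lt_of_lt_of_le one_lt_two (hE e he)) v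
    obtain ⟨k, hk⟩ := (hσ e he).2 v hv w hw
    have hvk : ∀ k, (σ e)^[k] v = v := by
      intro k
      induction k with
      | zero => simp
      | succ n ih => rw [Function.iterate_succ_apply', ih, hfix]
    exact hwv (by rw [hvk k] at hk; exact hk.symm)
  have hvalid : ValidChoice E A C := by
    intro v _ e he hv
    exact ⟨(hσ e he).1 v hv, hne e he v hv⟩
  have hcanc : Cancellative E A C := by
    intro e he _
    have hmaps : Set.MapsTo (fun v => C v e) (e : Set V) (e : Set V) := by
      intro v hv
      exact (hσ e he).1 v hv
    refine ((e : Set V).toFinite.surjOn_iff_bijOn_of_mapsTo hmaps).1 ?_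
    intro w hw
    have hwe : w ∈ e := hw
    have hσw : σ e w ∈ e := (hσ e he).1 w hwe
    obtain ⟨k, hk⟩ := (hσ e he).2 (σ e w) hσw w hwe
    refine ⟨(σ e)^[k] w, hiter e he w hwe k, ?_⟩
    show σ e ((σ e)^[k] w) = w
    calc σ e ((σ e)^[k] w) = (σ e)^[k+1] w := (Function.iterate_succ_apply' _ _ _).symm
    _ = (σ e)^[k] (σ e w) := Function.iterate_succ_apply _ _ _
    _ = w := hk
  have := hready C hvalid hcanc i
  simpa [fireResult, C] using this
end

section
/- Let H be a connected hypergraph with sink q. A configuration c on the nonsink vertices is superstable for H if and only if there exists a vertex-induced cycling C of H such that c is a superstable configuration (equivalently a G-parking function) of the Eulerian digraph D_C(H). -/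
open scoped Classical

/-- `c` is superstable for the hypergraph `H`: no nonempty set `T` of nonsink vertices
satisfies `deg_T(i) ≤ c_i` for all `i ∈ T`. -/
def HSuperstable {V : Type*} [Fintype V] [DecidableEq V] (E : Finset (Finset V)) (q : V)
    (c : V → ℕ) : Prop :=
  ¬ ∃ T : Finset V, T.Nonempty ∧ (∀ i ∈ T, i ≠ q) ∧ ∀ i ∈ T, degT E T i ≤ c i

/-- `σ` is the cycling of `H` induced by the linear order on vertices given by the
embedding `β : V ↪ ℕ`: within each hyperedge `e`, `σ e v` is the next-larger element of
`e`, or the minimum of `e` if `v` is the maximum of `e`. -/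
def IsInducedCycling {V : Type*} (E : Finset (Finset V)) (β : V ↪ ℕ)
    (σ : Finset V → V → V) : Prop :=
  ∀ e ∈ E, ∀ v ∈ e, σ e v ∈ e ∧
    ((∃ w ∈ e, β v < β w) →
      β v < β (σ e v) ∧ ∀ w ∈ e, β v < β w → β (σ e v) ≤ β w) ∧
    ((∀ w ∈ e, β w ≤ β v) → ∀ w ∈ e, β (σ e v) ≤ β w)

/-- `c` is superstable for the digraph `D_C(H)` associated to the cycling `σ`:
no nonempty set `T` of nonsink vertices can be set-fired (via the digraph reduced
Laplacian) without some coordinate going negative. -/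
def DSuperstable {V : Type*} [Fintype V] [DecidableEq V] (E : Finset (Finset V)) (q : V)
    (σ : Finset V → V → V) (c : V → ℕ) : Prop :=
  ¬ ∃ T : Finset V, T.Nonempty ∧ (∀ i ∈ T, i ≠ q) ∧ ∀ i ∈ T,
    ((E.filter fun e => i ∈ e).card : ℤ) ≤
      (c i : ℤ) + ∑ u ∈ T, ((E.filter fun e => u ∈ e ∧ σ e u = i).card : ℤ)

section Aux

variable {V : Type*} [DecidableEq V]

/-- the cyclic successor: least element above `v`, else the minimum of `e`. -/
noncomputable def nextVert (β : V ↪ ℕ) (e : Finset V) (v : V) : V :=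
  if h : (e.filter fun w => β v < β w).Nonempty then
    (Finset.exists_min_image _ β h).choose
  else if h2 : e.Nonempty then (Finset.exists_min_image e β h2).choose
  else v

lemma nextVert_isInducedCycling (E : Finset (Finset V)) (β : V ↪ ℕ) :
    IsInducedCycling E β (nextVert β) := by
  intro e _ v hv
  by_cases h : (e.filter fun w => β v < β w).Nonempty
  · have hdef : nextVert β e v = (Finset.exists_min_image _ β h).choose := dif_pos h
    obtain ⟨hmem, hmin⟩ := (Finset.exists_min_image _ β h).choose_spec
    rw [Finset.mem_filter] at hmem
    rw [hdef]
    refine ⟨hmem.1, fun _ => ⟨hmem.2, fun w hw hlt => hmin w (Finset.mem_filter.mpr ⟨hw, hlt⟩)⟩, ?_⟩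
    intro hall
    obtain ⟨w, hw⟩ := h
    rw [Finset.mem_filter] at hw
    exact absurd (hall w hw.1) (not_le.mpr hw.2)
  · have hne : e.Nonempty := ⟨v, hv⟩
    have hdef : nextVert β e v = (Finset.exists_min_image e β hne).choose := by
      rw [nextVert, dif_neg h, dif_pos hne]
    obtain ⟨hmem, hmin⟩ := (Finset.exists_min_image e β hne).choose_spec
    rw [hdef]
    refine ⟨hmem, ?_, fun _ => hmin⟩
    rintro ⟨w, hw, hlt⟩
    exact (h ⟨w, Finset.mem_filter.mpr ⟨hw, hlt⟩⟩).elim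

variable {E : Finset (Finset V)} {β : V ↪ ℕ} {σ : Finset V → V → V}

/-- injectivity of a cycling within an edge. -/
lemma cyc_inj (hσ : IsInducedCycling E β σ) {e : Finset V} (he : e ∈ E) {u u' i : V}
    (hu : u ∈ e) (hu' : u' ∈ e) (h1 : σ e u = i) (h2 : σ e u' = i) : u = u' := by
  have key : ∀ a b : V, a ∈ e → b ∈ e → σ e a = i → σ e b = i → β a < β b → False := by
    intro a b ha hb hsa hsb hab
    obtain ⟨_, hup, hmax⟩ := hσ e he a ha
    obtain ⟨h3, h4⟩ := hup ⟨b, hb, hab⟩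
    rw [hsa] at h3 h4
    have h5 : β i ≤ β b := h4 b hb hab
    by_cases hex : ∃ w ∈ e, β b < β w
    · have := (hσ e he b hb).2.1 hex
      rw [hsb] at this
      omega
    · push_neg at hex
      have := (hσ e he b hb).2.2 (fun w hw => hex w hw) a ha
      rw [hsb] at this
      omega
  rcases lt_trichotomy (β u) (β u') with hlt | heq | hgt
  · exact absurd (key u u' hu hu' h1 h2 hlt) not_false
  · exact β.injective heq
  · exact absurd (key u' u hu' hu h2 h1 hgt) not_false

/-- surjectivity of a cycling within an edge. -/
lemma cyc_surj (hσ : IsInducedCycling E β σ) {e : Finset V} (he : e ∈ E) {i : V}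
    (hi : i ∈ e) : ∃ u ∈ e, σ e u = i := by
  by_cases hb : (e.filter fun w => β w < β i).Nonempty
  · obtain ⟨u, hu, hmax⟩ := Finset.exists_max_image _ β hb
    rw [Finset.mem_filter] at hu
    obtain ⟨hmem, hup, _⟩ := hσ e he u hu.1
    obtain ⟨h3, h4⟩ := hup ⟨i, hi, hu.2⟩
    have h5 : β (σ e u) ≤ β i := h4 i hi hu.2
    have h6 : ¬ β (σ e u) < β i := by
      intro hlt
      have := hmax (σ e u) (Finset.mem_filter.mpr ⟨hmem, hlt⟩)
      omega
    exact ⟨u, hu.1, β.injective (le_antisymm h5 (not_lt.mp h6))⟩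
  · have hmin : ∀ w ∈ e, β i ≤ β w := by
      intro w hw
      by_contra hlt
      exact hb ⟨w, Finset.mem_filter.mpr ⟨hw, not_le.mp hlt⟩⟩
    obtain ⟨u, hu, hmax⟩ := Finset.exists_max_image e β ⟨i, hi⟩
    obtain ⟨hmem, _, hbot⟩ := hσ e he u hu
    have h1 : β (σ e u) ≤ β i := hbot hmax i hi
    have h2 : β i ≤ β (σ e u) := hmin _ hmem
    exact ⟨u, hu, β.injective (le_antisymm h1 h2)⟩

end Aux

section Main

variable {V : Type*} [Fintype V] [DecidableEq V]

/-- Easy direction: D-superstable for some induced cycling implies H-superstable. -/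
lemma dsuper_to_hsuper {E : Finset (Finset V)} {q : V} {β : V ↪ ℕ}
    {σ : Finset V → V → V} {c : V → ℕ}
    (hσ : IsInducedCycling E β σ) (hD : DSuperstable E q σ c) : HSuperstable E q c := by
  rintro ⟨T, hTne, hTq, hTle⟩
  refine hD ⟨T, hTne, hTq, ?_⟩
  intro i hi
  have h1 : degT E T i ≤ c i := hTle i hi
  have hsplit : (E.filter fun e => i ∈ e).card
      = degT E T i + (E.filter fun e => i ∈ e ∧ e ⊆ T).card := by
    rw [degT]
    rw [← Finset.filter_filter (fun e => i ∈ e) (fun e => ¬ e ⊆ T),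
        ← Finset.filter_filter (fun e => i ∈ e) (fun e => e ⊆ T)]
    rw [add_comm]
    exact (Finset.card_filter_add_card_filter_not (fun e => e ⊆ T)).symm
  have h2 : (E.filter fun e => i ∈ e ∧ e ⊆ T).card
      ≤ ∑ u ∈ T, (E.filter fun e => u ∈ e ∧ σ e u = i).card := by
    calc (E.filter fun e => i ∈ e ∧ e ⊆ T).card
        ≤ (T.biUnion fun u => E.filter fun e => u ∈ e ∧ σ e u = i).card := by
          apply Finset.card_le_card
          intro e he
          rw [Finset.mem_filter] at he
          obtain ⟨heE, hie, heT⟩ := he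
          obtain ⟨u, hue, hsu⟩ := cyc_surj hσ heE hie
          exact Finset.mem_biUnion.mpr ⟨u, heT hue, Finset.mem_filter.mpr ⟨heE, hue, hsu⟩⟩
      _ ≤ ∑ u ∈ T, (E.filter fun e => u ∈ e ∧ σ e u = i).card := Finset.card_biUnion_le
  have hN : (E.filter fun e => i ∈ e).card
      ≤ c i + ∑ u ∈ T, (E.filter fun e => u ∈ e ∧ σ e u = i).card := by omega
  calc ((E.filter fun e => i ∈ e).card : ℤ)
      ≤ ((c i + ∑ u ∈ T, (E.filter fun e => u ∈ e ∧ σ e u = i).card : ℕ) : ℤ) := by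
        exact_mod_cast hN
    _ = (c i : ℤ) + ∑ u ∈ T, ((E.filter fun e => u ∈ e ∧ σ e u = i).card : ℤ) := by
        push_cast; ring

/-- Burning: existence of a list exhausting `Bᶜ` with the burning property. -/
lemma exists_burn_list {E : Finset (Finset V)} {q : V} {c : V → ℕ}
    (hss : HSuperstable E q c) :
    ∀ n (B : Finset V), q ∈ B → Bᶜ.card = n →
      ∃ l : List V, l.Nodup ∧ l.toFinset = Bᶜ ∧
        ∀ (l1 l2 : List V) (i : V), l = l1 ++ i :: l2 →
          c i < (E.filter fun e => i ∈ e ∧ ∃ x ∈ e, x ∈ B ∪ l1.toFinset).card := by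
  intro n
  induction n with
  | zero =>
    intro B _ hcard
    refine ⟨[], List.nodup_nil, ?_, ?_⟩
    · simp [Finset.card_eq_zero.mp hcard]
    · rintro l1 l2 i hsplit
      exact absurd hsplit (by simp)
  | succ n ih =>
    intro B hqB hcard
    have hTne : (Bᶜ : Finset V).Nonempty := Finset.card_pos.mp (by omega)
    have hTq : ∀ i ∈ (Bᶜ : Finset V), i ≠ q := by
      intro i hi
      rw [Finset.mem_compl] at hi
      rintro rfl; exact hi hqB
    have hex : ∃ i ∈ (Bᶜ : Finset V), ¬ (degT E Bᶜ i ≤ c i) := by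
      by_contra h
      push_neg at h
      exact hss ⟨Bᶜ, hTne, hTq, h⟩
    obtain ⟨i, hiT, hdeg⟩ := hex
    rw [not_le] at hdeg
    have hkey : c i < (E.filter fun e => i ∈ e ∧ ∃ x ∈ e, x ∈ B).card := by
      have : degT E Bᶜ i = (E.filter fun e => i ∈ e ∧ ∃ x ∈ e, x ∈ B).card := by
        rw [degT]
        congr 1
        apply Finset.filter_congr
        intro e _
        simp [Finset.not_subset, Finset.mem_compl]
      omega
    have hqB' : q ∈ insert i B := Finset.mem_insert_of_mem hqB
    have hcard' : (insert i B)ᶜ.card = n := by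
      rw [Finset.compl_insert, Finset.card_erase_of_mem hiT]
      omega
    obtain ⟨l', hnd, htf, hprop⟩ := ih (insert i B) hqB' hcard'
    have hinl' : i ∉ l' := by
      rw [← List.mem_toFinset, htf, Finset.compl_insert]
      simp
    refine ⟨i :: l', List.nodup_cons.mpr ⟨hinl', hnd⟩, ?_, ?_⟩
    · rw [List.toFinset_cons, htf, Finset.compl_insert,
        Finset.insert_erase (Finset.mem_compl.mpr (Finset.mem_compl.mp hiT))]
    · intro l1 l2 j hsplit
      match l1, hsplit with
      | [], hsplit =>
        obtain ⟨rfl, rfl⟩ : i = j ∧ l' = l2 := by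
          simpa using hsplit
        simpa using hkey
      | a :: l1', hsplit =>
        obtain ⟨rfl, hsplit'⟩ : i = a ∧ l' = l1' ++ j :: l2 := by
          simpa using hsplit
        have := hprop l1' l2 j hsplit'
        have hset : insert i B ∪ l1'.toFinset = B ∪ (i :: l1').toFinset := by
          ext x
          simp [or_comm, or_assoc, or_left_comm]
        rwa [hset] at this

/-- indexOf of an element of a proper prefix is smaller. -/
lemma indexOf_prefix_lt {L P l2 : List V} {i x : V}
    (h : L = P ++ i :: l2) (hnd : L.Nodup) (hx : x ∈ P) : L.idxOf x < L.idxOf i := by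
  induction P generalizing L with
  | nil => simp at hx
  | cons a P ih =>
    subst h
    rw [List.cons_append] at *
    rw [List.nodup_cons] at hnd
    have hai : a ≠ i := by
      intro h; exact hnd.1 (by simp [h])
    rcases List.mem_cons.mp hx with rfl | hxP
    · rw [List.idxOf_cons_self, List.idxOf_cons_ne _ hai]
      omega
    · have hax : a ≠ x := by
        rintro rfl; exact hnd.1 (by simp [hxP])
      rw [List.idxOf_cons_ne _ hax, List.idxOf_cons_ne _ hai]
      have := ih rfl hnd.2 hxP
      omega

/-- From H-superstability produce a linear order with the key burning property. -/
lemma exists_beta {E : Finset (Finset V)} {q : V} {c : V → ℕ}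
    (hss : HSuperstable E q c) :
    ∃ β : V ↪ ℕ, ∀ i : V, i ≠ q →
      c i < (E.filter fun e => i ∈ e ∧ ∃ x ∈ e, β x < β i).card := by
  obtain ⟨l, hnd, htf, hprop⟩ := exists_burn_list hss (({q} : Finset V)ᶜ).card {q}
    (Finset.mem_singleton_self q) rfl
  set L : List V := q :: l with hL
  have hqnl : q ∉ l := by
    rw [← List.mem_toFinset, htf]
    simp
  have hLnd : L.Nodup := List.nodup_cons.mpr ⟨hqnl, hnd⟩
  have hmemL : ∀ v : V, v ∈ L := by
    intro v
    by_cases hv : v = q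
    · simp [hL, hv]
    · have : v ∈ l := by
        rw [← List.mem_toFinset, htf]
        simpa using hv
      simp [hL, this]
  have hinj : Function.Injective (fun v => L.idxOf v) := by
    intro x y hxy
    exact (List.idxOf_inj (hmemL x)).mp hxy
  refine ⟨⟨fun v => L.idxOf v, hinj⟩, ?_⟩
  intro i hiq
  have hil : i ∈ l := by
    rw [← List.mem_toFinset, htf]
    simpa using hiq
  obtain ⟨l1, l2, hsplit⟩ := List.append_of_mem hil
  have hk := hprop l1 l2 i hsplit
  have hLsplit : L = (q :: l1) ++ i :: l2 := by rw [hL, hsplit]; rfl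
  refine lt_of_lt_of_le hk (Finset.card_le_card ?_)
  intro e he
  rw [Finset.mem_filter] at he ⊢
  obtain ⟨heE, hie, x, hxe, hxmem⟩ := he
  refine ⟨heE, hie, x, hxe, ?_⟩
  show L.idxOf x < L.idxOf i
  apply indexOf_prefix_lt hLsplit hLnd
  rcases Finset.mem_union.mp hxmem with hx | hx
  · simp [Finset.mem_singleton.mp hx]
  · simp [List.mem_toFinset.mp hx]

/-- Hard direction: H-superstable implies D-superstable for the burning order. -/
lemma hsuper_to_dsuper {E : Finset (Finset V)} {q : V} {c : V → ℕ}
    (hss : HSuperstable E q c) :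
    ∃ (β : V ↪ ℕ) (σ : Finset V → V → V),
      IsInducedCycling E β σ ∧ DSuperstable E q σ c := by
  obtain ⟨β, hK⟩ := exists_beta hss
  refine ⟨β, nextVert β, nextVert_isInducedCycling E β, ?_⟩
  set σ := nextVert β with hσdef
  have hσ : IsInducedCycling E β σ := nextVert_isInducedCycling E β
  rintro ⟨T, hTne, hTq, hle⟩
  obtain ⟨i, hiT, himin⟩ := T.exists_min_image β hTne
  have hiq : i ≠ q := hTq i hiT
  have hle' := hle i hiT
  have hK' := hK i hiq
  -- the sum is bounded by the edges containing i with no vertex below i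
  have hSum : ∑ u ∈ T, (E.filter fun e => u ∈ e ∧ σ e u = i).card
      ≤ (E.filter fun e => i ∈ e ∧ ¬ ∃ x ∈ e, β x < β i).card := by
    have hdisj : ∀ u ∈ T, ∀ u' ∈ T, u ≠ u' →
        Disjoint (E.filter fun e => u ∈ e ∧ σ e u = i)
          (E.filter fun e => u' ∈ e ∧ σ e u' = i) := by
      intro u _ u' _ huu'
      rw [Finset.disjoint_left]
      intro e he he'
      rw [Finset.mem_filter] at he he'
      exact huu' (cyc_inj hσ he.1 he.2.1 he'.2.1 he.2.2 he'.2.2)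
    rw [← Finset.card_biUnion hdisj]
    apply Finset.card_le_card
    intro e he
    rw [Finset.mem_biUnion] at he
    obtain ⟨u, huT, hef⟩ := he
    rw [Finset.mem_filter] at hef
    obtain ⟨heE, hue, hsu⟩ := hef
    obtain ⟨hmem, hup, hbot⟩ := hσ e heE u hue
    rw [hsu] at hmem
    rw [Finset.mem_filter]
    refine ⟨heE, hmem, ?_⟩
    rintro ⟨x, hxe, hxlt⟩
    have hui : β i ≤ β u := himin u huT
    by_cases hex : ∃ w ∈ e, β u < β w
    · have := (hup hex).1
      rw [hsu] at this
      omega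
    · push_neg at hex
      have := hbot (fun w hw => hex w hw) x hxe
      rw [hsu] at this
      omega
  have hdeg : (E.filter fun e => i ∈ e).card
      = (E.filter fun e => i ∈ e ∧ ∃ x ∈ e, β x < β i).card
        + (E.filter fun e => i ∈ e ∧ ¬ ∃ x ∈ e, β x < β i).card := by
    rw [← Finset.filter_filter (fun e => i ∈ e) (fun e => ∃ x ∈ e, β x < β i),
        ← Finset.filter_filter (fun e => i ∈ e) (fun e => ¬ ∃ x ∈ e, β x < β i)]
    exact (Finset.card_filter_add_card_filter_not (fun e => ∃ x ∈ e, β x < β i)).symm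
  have hcast : (∑ u ∈ T, ((E.filter fun e => u ∈ e ∧ σ e u = i).card : ℤ))
      = ((∑ u ∈ T, (E.filter fun e => u ∈ e ∧ σ e u = i).card : ℕ) : ℤ) := by
    push_cast; ring
  rw [hcast] at hle'
  have hle'' : (E.filter fun e => i ∈ e).card
      ≤ c i + ∑ u ∈ T, (E.filter fun e => u ∈ e ∧ σ e u = i).card := by
    exact_mod_cast hle'
  omega

end Main

/-- A configuration `c` is superstable for a connected hypergraph `H` with sink `q` iff
it is superstable (equivalently, a `G`-parking function) for the Eulerian digraph
`D_C(H)` of some vertex-induced cycling `C` of `H`. -/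
theorem hsuperstable_iff_exists_induced_cycling {V : Type*} [Fintype V] [DecidableEq V]
    (E : Finset (Finset V)) (q : V) (hconn : HConnected E) (hE : ∀ e ∈ E, 2 ≤ e.card)
    (c : V → ℕ) :
    HSuperstable E q c ↔
      ∃ (β : V ↪ ℕ) (σ : Finset V → V → V),
        IsInducedCycling E β σ ∧ DSuperstable E q σ c := by
  constructor
  · exact hsuper_to_dsuper
  · rintro ⟨β, σ, hσ, hD⟩
    exact dsuper_to_hsuper hσ hD
end
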